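/- arXiv:1006.0367 — 3 statements merged into one kernel-verified Lean document; each statement's English description precedes it below -/
import Mathlib

section
/- Let A be an atomic set partition of [n] (n ≥ 1) with r blocks. Then the element p(A) := ∑_{γ ∈ Γ'(r)} (−1)^{ℓ(γ)−1} γ[A] of NCSym is primitive: Δ(p(A)) = p(A) ⊗ ∅ + ∅ ⊗ p(A). -/
open Finset

/-- `[n] = {1, …, n}` as a finset of naturals. -/
def seg (n : ℕ) : Finset ℕ := Finset.Icc 1 n

/-- A (raw) collection of blocks. -/
abbrev Blocks := Finset (Finset ℕ)

/-- The ground set (union of the blocks). -/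
def ground (A : Blocks) : Finset ℕ := A.sup id

/-- `A` is a set partition of the finite set `X`: nonempty pairwise disjoint blocks with union `X`. -/
def IsPartitionOf (A : Blocks) (X : Finset ℕ) : Prop :=
  (∀ B ∈ A, B.Nonempty) ∧ (A : Set (Finset ℕ)).PairwiseDisjoint id ∧ ground A = X

/-- `A` is a set partition of `[n]`. -/
def IsSP (A : Blocks) (n : ℕ) : Prop := IsPartitionOf A (seg n)

/-- The unique increasing bijection from `X` onto `[#X]`. -/
def stdFun (X : Finset ℕ) (x : ℕ) : ℕ := (X.filter (· < x)).card + 1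

/-- Standardization of a collection of blocks. -/
def stdP (A : Blocks) : Blocks := A.image fun B => B.image (stdFun (ground A))

/-- Shift all entries of all blocks up by `k`. -/
def shiftP (A : Blocks) (k : ℕ) : Blocks := A.image fun B => B.image (· + k)

/-- Concatenation `A | B` of set partitions: shift `B` up by the weight of `A`. -/
def concatP (A B : Blocks) : Blocks := A ∪ shiftP B (ground A).card

/-- The `i`-th block of `A` (1-based), where blocks are ordered by increasing minima. -/
def blockAt (A : Blocks) (i : ℕ) : Finset ℕ :=
  (A.filter fun B => (A.filter fun C => C.min ≤ B.min).card = i).sup id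

/-- `A_J` : the subcollection of blocks of `A` indexed by `J`. -/
def subColl (A : Blocks) (J : Finset ℕ) : Blocks := J.image (blockAt A)

/-- `A` is an atomic set partition of `[n]`. -/
def IsAtomicSP (A : Blocks) (n : ℕ) : Prop :=
  IsSP A n ∧ 1 ≤ n ∧
    ¬ ∃ m B C, 0 < m ∧ m < n ∧ IsSP B m ∧ IsSP C (n - m) ∧ A = concatP B C

/-- Raw set compositions: words whose letters are finsets of naturals. -/
abbrev SComp := List (Finset ℕ)

/-- The union of the letters of a word. -/
def sunion (γ : SComp) : Finset ℕ := γ.foldr (· ∪ ·) ∅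

/-- `γ` is a set composition of `K`. -/
def IsSCompOf (γ : SComp) (K : Finset ℕ) : Prop :=
  (∀ B ∈ γ, B.Nonempty) ∧ γ.Pairwise Disjoint ∧ sunion γ = K

/-- `γ[A] = std(A_{γ₁}) | std(A_{γ₂}) | ⋯ | std(A_{γₛ})`. -/
def applyComp (γ : SComp) (A : Blocks) : Blocks :=
  (γ.map fun g => stdP (subColl A g)).foldr concatP ∅

abbrev NCSym := Blocks →₀ ℚ

/-- The basis element of `NCSym` indexed by a set partition. -/
noncomputable def bas (A : Blocks) : NCSym := Finsupp.single A 1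

/-- `p(A) = ∑_{γ ∈ Γ'(r)} (-1)^{ℓ(γ)-1} γ[A]`. -/
noncomputable def pNC (A : Blocks) (r : ℕ) : NCSym :=
  ∑ᶠ γ ∈ {γ : SComp | IsSCompOf γ (seg r) ∧ 1 ∈ γ.headI},
    ((-1 : ℚ) ^ (γ.length - 1)) • bas (applyComp γ A)

open TensorProduct in
/-- `Δ(A) = ∑_{K ⊔ L = [r]} std(A_K) ⊗ std(A_L)` on a basis element. -/
noncomputable def deltaB (A : Blocks) : NCSym ⊗[ℚ] NCSym :=
  ∑ K ∈ (seg A.card).powerset,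
    bas (stdP (subColl A K)) ⊗ₜ[ℚ] bas (stdP (subColl A (seg A.card \ K)))

/-- The coproduct of `NCSym`, extended linearly. -/
noncomputable def Delta : NCSym →ₗ[ℚ] TensorProduct ℚ NCSym NCSym :=
  Finsupp.lsum ℚ fun A => LinearMap.toSpanSingleton ℚ _ (deltaB A)

namespace NCAux

/-! ### Generic rank function -/

variable {α : Type*} [LinearOrder α]

/-- rank of `x` in finset `S` : number of elements of `S` that are `≤ x`. -/
def rk (S : Finset α) (x : α) : ℕ := (S.filter (· ≤ x)).card

lemma rk_le_card (S : Finset α) (x : α) : rk S x ≤ S.card :=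
  Finset.card_le_card (Finset.filter_subset _ _)

lemma one_le_rk {S : Finset α} {x : α} (hx : x ∈ S) : 1 ≤ rk S x := by
  have : x ∈ S.filter (· ≤ x) := by simp [hx]
  exact Finset.card_pos.2 ⟨x, this⟩

lemma rk_mono (S : Finset α) {x y : α} (hxy : x ≤ y) : rk S x ≤ rk S y := by
  apply Finset.card_le_card
  intro a ha
  simp only [Finset.mem_filter] at *
  exact ⟨ha.1, le_trans ha.2 hxy⟩

lemma rk_strict (S : Finset α) {x y : α} (hy : y ∈ S) (hxy : x < y) : rk S x < rk S y := by
  apply Finset.card_lt_card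
  constructor
  · intro a ha; simp only [Finset.mem_filter] at *; exact ⟨ha.1, le_trans ha.2 hxy.le⟩
  · intro h
    have : y ∈ S.filter (· ≤ y) := by simp [hy]
    have := h this
    simp only [Finset.mem_filter] at this
    exact absurd this.2 (not_le.2 hxy)

lemma rk_injOn (S : Finset α) : Set.InjOn (rk S) ↑S := by
  intro x hx y hy h
  rcases lt_trichotomy x y with hl | he | hl
  · exact absurd h (Nat.ne_of_lt (rk_strict S hy hl))
  · exact he
  · exact absurd h.symm (Nat.ne_of_lt (rk_strict S hx hl))

lemma rk_lt_rk_iff {S : Finset α} {x y : α} (hx : x ∈ S) (hy : y ∈ S) :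
    rk S x < rk S y ↔ x < y := by
  constructor
  · intro h
    by_contra hc
    push_neg at hc
    exact absurd (rk_mono S hc) (not_le.2 h)
  · exact rk_strict S hy

lemma rk_le_rk_iff {S : Finset α} {x y : α} (hx : x ∈ S) (hy : y ∈ S) :
    rk S x ≤ rk S y ↔ x ≤ y := by
  rw [← not_lt, ← not_lt, rk_lt_rk_iff hy hx]

lemma rk_image (S : Finset α) : S.image (rk S) = Finset.Icc 1 S.card := by
  apply Finset.eq_of_subset_of_card_le
  · intro i hi
    simp only [Finset.mem_image] at hi
    obtain ⟨x, hx, rfl⟩ := hi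
    simp only [Finset.mem_Icc]
    exact ⟨one_le_rk hx, rk_le_card S x⟩
  · rw [Finset.card_image_of_injOn (rk_injOn S), Nat.card_Icc]
    omega

lemma rk_surj {S : Finset α} {i : ℕ} (h1 : 1 ≤ i) (h2 : i ≤ S.card) :
    ∃ x ∈ S, rk S x = i := by
  have : i ∈ S.image (rk S) := by rw [rk_image]; simp only [Finset.mem_Icc]; exact ⟨h1, h2⟩
  simpa using this

end NCAux
namespace NCAux

/-! ### stdFun facts -/

lemma stdFun_eq_rk {X : Finset ℕ} {x : ℕ} (hx : x ∈ X) : stdFun X x = rk X x := by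
  unfold stdFun rk
  have : X.filter (· ≤ x) = insert x (X.filter (· < x)) := by
    ext y
    simp only [Finset.mem_filter, Finset.mem_insert]
    constructor
    · rintro ⟨hy, hle⟩
      rcases eq_or_lt_of_le hle with h | h
      · exact Or.inl h
      · exact Or.inr ⟨hy, h⟩
    · rintro (rfl | ⟨hy, hlt⟩)
      · exact ⟨hx, le_refl _⟩
      · exact ⟨hy, hlt.le⟩
  rw [this, Finset.card_insert_of_notMem (by simp)]

lemma stdFun_strictMonoOn (X : Finset ℕ) : StrictMonoOn (stdFun X) ↑X := by
  intro x hx y hy hxy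
  simp only [Finset.mem_coe] at hx hy
  rw [stdFun_eq_rk hx, stdFun_eq_rk hy]
  exact rk_strict X hy hxy

lemma stdFun_injOn (X : Finset ℕ) : Set.InjOn (stdFun X) ↑X :=
  (stdFun_strictMonoOn X).injOn

lemma stdFun_image (X : Finset ℕ) : X.image (stdFun X) = seg X.card := by
  rw [show X.image (stdFun X) = X.image (rk X) from
    Finset.image_congr (fun x hx => stdFun_eq_rk hx)]
  exact rk_image X

/-! ### Good collections, ground, mapP -/

def Good (A : Blocks) : Prop :=
  (∀ B ∈ A, B.Nonempty) ∧ (A : Set (Finset ℕ)).PairwiseDisjoint id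

lemma Good.empty : Good (∅ : Blocks) := ⟨by simp, by simp⟩

lemma subset_ground {A : Blocks} {B : Finset ℕ} (hB : B ∈ A) : B ⊆ ground A :=
  Finset.le_sup (f := id) hB

lemma ground_empty : ground (∅ : Blocks) = ∅ := rfl

def mapP (f : ℕ → ℕ) (A : Blocks) : Blocks := A.image (Finset.image f)

lemma stdP_eq_mapP (A : Blocks) : stdP A = mapP (stdFun (ground A)) A := rfl

lemma shiftP_eq_mapP (A : Blocks) (k : ℕ) : shiftP A k = mapP (· + k) A := rfl

lemma ground_mapP (f : ℕ → ℕ) (A : Blocks) : ground (mapP f A) = (ground A).image f := by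
  unfold ground mapP
  rw [Finset.sup_image]
  induction A using Finset.induction with
  | empty => simp
  | insert _ _ h ih =>
      rw [Finset.sup_insert, Finset.sup_insert, ih]
      simp only [Function.comp, id]
      show Finset.image f _ ∪ Finset.image f _ = Finset.image f (_ ∪ _)
      exact (Finset.image_union _ _).symm

lemma ground_stdP (A : Blocks) : ground (stdP A) = seg (ground A).card := by
  rw [stdP_eq_mapP, ground_mapP, stdFun_image]

lemma mapP_mapP (f g : ℕ → ℕ) (A : Blocks) : mapP g (mapP f A) = mapP (g ∘ f) A := by
  unfold mapP
  rw [Finset.image_image]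
  apply Finset.image_congr
  intro B _
  simp [Finset.image_image]

lemma mapP_congr {f g : ℕ → ℕ} {A : Blocks} (h : ∀ x ∈ ground A, f x = g x) :
    mapP f A = mapP g A := by
  unfold mapP
  apply Finset.image_congr
  intro B hB
  exact Finset.image_congr (fun x hx => h x (subset_ground hB hx))

lemma mapP_id (A : Blocks) : mapP id A = A := by
  unfold mapP
  apply Finset.image_congr ?_ |>.trans (Finset.image_id)
  intro B _
  exact Finset.image_id

lemma block_injOn_of_injOn {f : ℕ → ℕ} {A : Blocks} (hf : Set.InjOn f ↑(ground A)) :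
    Set.InjOn (Finset.image f) ↑A := by
  intro B hB C hC h
  simp only [Finset.mem_coe] at hB hC
  ext x
  constructor
  · intro hx
    have : f x ∈ C.image f := h ▸ Finset.mem_image_of_mem f hx
    obtain ⟨y, hy, hxy⟩ := Finset.mem_image.1 this
    have := hf (subset_ground hC hy) (subset_ground hB hx) hxy
    rwa [this] at hy
  · intro hx
    have : f x ∈ B.image f := h ▸ Finset.mem_image_of_mem f hx
    obtain ⟨y, hy, hxy⟩ := Finset.mem_image.1 this
    have := hf (subset_ground hB hy) (subset_ground hC hx) hxy
    rwa [this] at hy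

lemma card_mapP {f : ℕ → ℕ} {A : Blocks} (hf : Set.InjOn f ↑(ground A)) :
    (mapP f A).card = A.card :=
  Finset.card_image_of_injOn (block_injOn_of_injOn hf)

lemma Good.mapP {f : ℕ → ℕ} {A : Blocks} (hA : Good A) (hf : Set.InjOn f ↑(ground A)) :
    Good (mapP f A) := by
  constructor
  · rintro B hB
    obtain ⟨C, hC, rfl⟩ := Finset.mem_image.1 hB
    exact (hA.1 C hC).image f
  · rintro B hB C hC hBC
    simp only [NCAux.mapP, Finset.coe_image, Set.mem_image, Finset.mem_coe] at hB hC
    obtain ⟨B', hB', rfl⟩ := hB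
    obtain ⟨C', hC', rfl⟩ := hC
    have hne : B' ≠ C' := fun h => hBC (by rw [h])
    have hdisj := hA.2 hB' hC' hne
    simp only [Function.onFun, id] at hdisj ⊢
    rw [Finset.disjoint_left] at hdisj ⊢
    intro x hx hx'
    obtain ⟨b, hb, rfl⟩ := Finset.mem_image.1 hx
    obtain ⟨c, hc, hcb⟩ := Finset.mem_image.1 hx'
    have := hf (subset_ground hC' hc) (subset_ground hB' hb) hcb
    exact hdisj hb (this ▸ hc)

lemma Good.stdP {A : Blocks} (hA : Good A) : Good (stdP A) := by
  rw [stdP_eq_mapP]; exact hA.mapP (stdFun_injOn _)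

lemma card_stdP {A : Blocks} (hA : Good A) : (stdP A).card = A.card := by
  rw [stdP_eq_mapP]; exact card_mapP (stdFun_injOn _)

end NCAux
namespace NCAux

/-! ### Block ranks -/

def rnk (A : Blocks) (B : Finset ℕ) : ℕ := (A.filter fun C => C.min ≤ B.min).card

lemma min_injOn {A : Blocks} (hA : Good A) :
    Set.InjOn (Finset.min : Finset ℕ → WithTop ℕ) (↑A : Set (Finset ℕ)) := by
  intro B hB C hC h
  simp only [Finset.mem_coe] at hB hC
  by_contra hne
  have hBne := hA.1 B hB
  have hCne := hA.1 C hC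
  have hdisj := hA.2 hB hC hne
  simp only [Function.onFun, id] at hdisj
  have h1 : (B.min' hBne : WithTop ℕ) = B.min := Finset.coe_min' hBne
  have h2 : (C.min' hCne : WithTop ℕ) = C.min := Finset.coe_min' hCne
  have : (B.min' hBne : WithTop ℕ) = (C.min' hCne : WithTop ℕ) := by rw [h1, h2, h]
  have heq : B.min' hBne = C.min' hCne := by exact_mod_cast this
  have : B.min' hBne ∈ B ∩ C := by
    rw [Finset.mem_inter]
    exact ⟨Finset.min'_mem B hBne, heq ▸ Finset.min'_mem C hCne⟩
  rw [Finset.disjoint_left] at hdisj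
  exact hdisj (Finset.mem_inter.1 this).1 (Finset.mem_inter.1 this).2

lemma card_filter_min {A : Blocks} (hA : Good A) (m : WithTop ℕ) :
    (A.filter fun C => C.min ≤ m).card = rk (A.image Finset.min) m := by
  unfold rk
  have himg : (A.image Finset.min).filter (· ≤ m) =
      (A.filter fun C => C.min ≤ m).image Finset.min := by
    ext x
    simp only [Finset.mem_filter, Finset.mem_image]
    constructor
    · rintro ⟨⟨C, hC, rfl⟩, hle⟩
      exact ⟨C, ⟨hC, hle⟩, rfl⟩
    · rintro ⟨C, ⟨hC, hle⟩, rfl⟩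
      exact ⟨⟨C, hC, rfl⟩, hle⟩
  rw [himg, Finset.card_image_of_injOn ((min_injOn hA).mono (by
    intro x hx
    simp only [Finset.coe_filter, Set.mem_setOf_eq] at hx
    exact Finset.mem_coe.2 hx.1))]

lemma rnk_eq_rk {A : Blocks} (hA : Good A) (B : Finset ℕ) :
    rnk A B = rk (A.image Finset.min) B.min := card_filter_min hA B.min

lemma card_image_min {A : Blocks} (hA : Good A) : (A.image Finset.min).card = A.card :=
  Finset.card_image_of_injOn (min_injOn hA)

lemma one_le_rnk {A : Blocks} (hA : Good A) {B : Finset ℕ} (hB : B ∈ A) : 1 ≤ rnk A B := by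
  rw [rnk_eq_rk hA]
  exact one_le_rk (Finset.mem_image_of_mem _ hB)

lemma rnk_le_card {A : Blocks} (hA : Good A) (B : Finset ℕ) : rnk A B ≤ A.card := by
  rw [rnk_eq_rk hA]
  exact (rk_le_card _ _).trans (by rw [card_image_min hA])

lemma rnk_le_rnk_iff {A : Blocks} (hA : Good A) {B C : Finset ℕ} (hB : B ∈ A) (hC : C ∈ A) :
    rnk A B ≤ rnk A C ↔ B.min ≤ C.min := by
  rw [rnk_eq_rk hA, rnk_eq_rk hA]
  exact rk_le_rk_iff (Finset.mem_image_of_mem _ hB) (Finset.mem_image_of_mem _ hC)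

lemma rnk_injOn {A : Blocks} (hA : Good A) : Set.InjOn (rnk A) ↑A := by
  intro B hB C hC h
  simp only [Finset.mem_coe] at hB hC
  apply min_injOn hA hB hC
  rw [rnk_eq_rk hA, rnk_eq_rk hA] at h
  exact rk_injOn _ (Finset.mem_image_of_mem _ hB) (Finset.mem_image_of_mem _ hC) h

lemma rnk_surj {A : Blocks} (hA : Good A) {i : ℕ} (h1 : 1 ≤ i) (h2 : i ≤ A.card) :
    ∃ B ∈ A, rnk A B = i := by
  obtain ⟨m, hm, hrk⟩ := rk_surj (S := A.image Finset.min) h1 (by rwa [card_image_min hA])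
  obtain ⟨B, hB, rfl⟩ := Finset.mem_image.1 hm
  exact ⟨B, hB, by rw [rnk_eq_rk hA]; exact hrk⟩

lemma blockAt_rnk {A : Blocks} (hA : Good A) {B : Finset ℕ} (hB : B ∈ A) :
    blockAt A (rnk A B) = B := by
  unfold blockAt
  have : (A.filter fun C => (A.filter fun D => D.min ≤ C.min).card = rnk A B) = {B} := by
    ext C
    simp only [Finset.mem_filter, Finset.mem_singleton]
    constructor
    · rintro ⟨hC, h⟩
      exact rnk_injOn hA hC hB h
    · rintro rfl
      exact ⟨hB, rfl⟩
  rw [this, Finset.sup_singleton]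
  rfl

lemma blockAt_mem {A : Blocks} (hA : Good A) {i : ℕ} (hi : i ∈ seg A.card) :
    blockAt A i ∈ A ∧ rnk A (blockAt A i) = i := by
  simp only [seg, Finset.mem_Icc] at hi
  obtain ⟨B, hB, hr⟩ := rnk_surj hA hi.1 hi.2
  rw [← hr, blockAt_rnk hA hB]
  exact ⟨hB, hr ▸ rfl⟩

lemma blockAt_injOn {A : Blocks} (hA : Good A) : Set.InjOn (blockAt A) ↑(seg A.card) := by
  intro i hi j hj h
  simp only [Finset.mem_coe] at hi hj
  have h1 := blockAt_mem hA hi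
  have h2 := blockAt_mem hA hj
  rw [← h1.2, ← h2.2, h]

lemma subColl_subset {A : Blocks} (hA : Good A) {J : Finset ℕ} (hJ : J ⊆ seg A.card) :
    subColl A J ⊆ A := by
  intro B hB
  obtain ⟨i, hi, rfl⟩ := Finset.mem_image.1 hB
  exact (blockAt_mem hA (hJ hi)).1

lemma Good.subColl {A : Blocks} (hA : Good A) {J : Finset ℕ} (hJ : J ⊆ seg A.card) :
    Good (subColl A J) := by
  constructor
  · intro B hB
    exact hA.1 B (subColl_subset hA hJ hB)
  · exact hA.2.subset (by exact_mod_cast Finset.coe_subset.2 (subColl_subset hA hJ))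

lemma card_subColl {A : Blocks} (hA : Good A) {J : Finset ℕ} (hJ : J ⊆ seg A.card) :
    (subColl A J).card = J.card :=
  Finset.card_image_of_injOn ((blockAt_injOn hA).mono (by exact_mod_cast hJ))

lemma ground_subColl_subset {A : Blocks} (hA : Good A) {J : Finset ℕ} (hJ : J ⊆ seg A.card) :
    ground (subColl A J) ⊆ ground A := by
  show ground _ ≤ ground A
  exact Finset.sup_le fun B hB => subset_ground (subColl_subset hA hJ hB)

lemma subColl_full {A : Blocks} (hA : Good A) : subColl A (seg A.card) = A := by
  apply Finset.eq_of_subset_of_card_le (subColl_subset hA (le_refl _))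
  rw [card_subColl hA (le_refl _)]
  simp [seg, Nat.card_Icc]

lemma subColl_empty (A : Blocks) : subColl A ∅ = ∅ := rfl

lemma rnk_subColl {A : Blocks} (hA : Good A) {J : Finset ℕ} (hJ : J ⊆ seg A.card)
    {i : ℕ} (hi : i ∈ J) :
    rnk (subColl A J) (blockAt A i) = rk J i := by
  unfold rnk rk
  have hGsub := hA.subColl hJ
  have key : (subColl A J).filter (fun C => C.min ≤ (blockAt A i).min)
      = (J.filter (· ≤ i)).image (blockAt A) := by
    ext B
    simp only [Finset.mem_filter, Finset.mem_image, subColl]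
    constructor
    · rintro ⟨⟨j, hj, rfl⟩, hle⟩
      refine ⟨j, ⟨hj, ?_⟩, rfl⟩
      have h1 := blockAt_mem hA (hJ hj)
      have h2 := blockAt_mem hA (hJ hi)
      have := (rnk_le_rnk_iff hA h1.1 h2.1).2 hle
      rw [h1.2, h2.2] at this
      exact this
    · rintro ⟨j, ⟨hj, hji⟩, rfl⟩
      refine ⟨⟨j, hj, rfl⟩, ?_⟩
      have h1 := blockAt_mem hA (hJ hj)
      have h2 := blockAt_mem hA (hJ hi)
      rw [← rnk_le_rnk_iff hA h1.1 h2.1, h1.2, h2.2]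
      exact hji
  rw [key, Finset.card_image_of_injOn ((blockAt_injOn hA).mono (by
    intro x hx
    simp only [Finset.coe_filter, Set.mem_setOf_eq] at hx
    exact Finset.mem_coe.2 (hJ hx.1)))]

lemma blockAt_subColl {A : Blocks} (hA : Good A) {J : Finset ℕ} (hJ : J ⊆ seg A.card)
    {i : ℕ} (hi : i ∈ J) :
    blockAt (subColl A J) (rk J i) = blockAt A i := by
  rw [← rnk_subColl hA hJ hi]
  exact blockAt_rnk (hA.subColl hJ) (Finset.mem_image_of_mem _ hi)

lemma subColl_subColl {A : Blocks} (hA : Good A) {J K : Finset ℕ} (hJ : J ⊆ seg A.card)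
    (hK : K ⊆ seg J.card) :
    subColl (subColl A J) K = subColl A (J.filter fun i => rk J i ∈ K) := by
  ext B
  rw [show subColl (subColl A J) K = K.image (blockAt (subColl A J)) from rfl,
    show subColl A (J.filter fun i => rk J i ∈ K)
      = (J.filter fun i => rk J i ∈ K).image (blockAt A) from rfl]
  simp only [Finset.mem_image, Finset.mem_filter]
  constructor
  · rintro ⟨k, hk, rfl⟩
    have hk' := hK hk
    simp only [seg, Finset.mem_Icc] at hk'
    obtain ⟨i, hi, hrk⟩ := rk_surj (S := J) hk'.1 hk'.2
    refine ⟨i, ⟨hi, hrk ▸ hk⟩, ?_⟩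
    rw [← hrk, blockAt_subColl hA hJ hi]
  · rintro ⟨i, ⟨hi, hik⟩, rfl⟩
    exact ⟨rk J i, hik, blockAt_subColl hA hJ hi⟩

end NCAux
namespace NCAux

/-! ### min and images, subColl vs mapP -/

lemma min'_image {B : Finset ℕ} (hB : B.Nonempty) {f : ℕ → ℕ}
    (hmono : ∀ x ∈ B, ∀ y ∈ B, x ≤ y → f x ≤ f y) :
    (B.image f).min' (hB.image f) = f (B.min' hB) := by
  apply le_antisymm
  · exact Finset.min'_le _ _ (Finset.mem_image_of_mem f (Finset.min'_mem B hB))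
  · apply Finset.le_min'
    intro y hy
    obtain ⟨b, hb, rfl⟩ := Finset.mem_image.1 hy
    exact hmono _ (Finset.min'_mem B hB) _ hb (Finset.min'_le B b hb)

lemma min_image {B : Finset ℕ} (hB : B.Nonempty) {f : ℕ → ℕ}
    (hmono : ∀ x ∈ B, ∀ y ∈ B, x ≤ y → f x ≤ f y) :
    (B.image f).min = ((f (B.min' hB) : ℕ) : WithTop ℕ) := by
  rw [← Finset.coe_min' (hB.image f), min'_image hB hmono]
  rfl

lemma rnk_mapP {A : Blocks} (hA : Good A) {f : ℕ → ℕ}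
    (hf : StrictMonoOn f ↑(ground A)) {B : Finset ℕ} (hB : B ∈ A) :
    rnk (mapP f A) (B.image f) = rnk A B := by
  unfold rnk
  have hmono : ∀ C ∈ A, ∀ x ∈ C, ∀ y ∈ C, x ≤ y → f x ≤ f y := fun C hC x hx y hy hxy =>
    hf.monotoneOn (subset_ground hC hx) (subset_ground hC hy) hxy
  have key : (mapP f A).filter (fun C => C.min ≤ (B.image f).min)
      = (A.filter fun C => C.min ≤ B.min).image (Finset.image f) := by
    ext C'
    simp only [Finset.mem_filter, NCAux.mapP, Finset.mem_image]
    constructor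
    · rintro ⟨⟨C, hC, rfl⟩, hle⟩
      refine ⟨C, ⟨hC, ?_⟩, rfl⟩
      have hCne := hA.1 C hC
      have hBne := hA.1 B hB
      rw [min_image hCne (hmono C hC), min_image hBne (hmono B hB)] at hle
      have hle' : f (C.min' hCne) ≤ f (B.min' hBne) := by exact_mod_cast hle
      have := (hf.le_iff_le (Finset.mem_coe.2 (subset_ground hC (Finset.min'_mem C hCne)))
        (Finset.mem_coe.2 (subset_ground hB (Finset.min'_mem B hBne)))).1 hle'
      rw [← Finset.coe_min' hCne, ← Finset.coe_min' hBne]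
      exact_mod_cast this
    · rintro ⟨C, ⟨hC, hle⟩, rfl⟩
      refine ⟨⟨C, hC, rfl⟩, ?_⟩
      have hCne := hA.1 C hC
      have hBne := hA.1 B hB
      rw [min_image hCne (hmono C hC), min_image hBne (hmono B hB)]
      rw [← Finset.coe_min' hCne, ← Finset.coe_min' hBne] at hle
      have hle' : C.min' hCne ≤ B.min' hBne := by exact_mod_cast hle
      have := (hf.le_iff_le (Finset.mem_coe.2 (subset_ground hC (Finset.min'_mem C hCne)))
        (Finset.mem_coe.2 (subset_ground hB (Finset.min'_mem B hBne)))).2 hle'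
      exact_mod_cast this
  rw [key, Finset.card_image_of_injOn ((block_injOn_of_injOn hf.injOn).mono (by
    intro x hx
    simp only [Finset.coe_filter, Set.mem_setOf_eq] at hx
    exact Finset.mem_coe.2 hx.1))]

lemma blockAt_mapP {A : Blocks} (hA : Good A) {f : ℕ → ℕ}
    (hf : StrictMonoOn f ↑(ground A)) {i : ℕ} (hi : i ∈ seg A.card) :
    blockAt (mapP f A) i = (blockAt A i).image f := by
  obtain ⟨hmem, hrnk⟩ := blockAt_mem hA hi
  conv_lhs => rw [← hrnk, ← rnk_mapP hA hf hmem]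
  exact blockAt_rnk (hA.mapP hf.injOn) (Finset.mem_image_of_mem _ hmem)

lemma subColl_mapP {A : Blocks} (hA : Good A) {f : ℕ → ℕ}
    (hf : StrictMonoOn f ↑(ground A)) {J : Finset ℕ} (hJ : J ⊆ seg A.card) :
    subColl (mapP f A) J = mapP f (subColl A J) := by
  show J.image (blockAt (mapP f A)) = (J.image (blockAt A)).image (Finset.image f)
  rw [Finset.image_image]
  apply Finset.image_congr
  intro i hi
  exact blockAt_mapP hA hf (hJ hi)

/-! ### Standardization lemmas -/

lemma std_mapP {A : Blocks} (hA : Good A) {f : ℕ → ℕ}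
    (hf : StrictMonoOn f ↑(ground A)) : stdP (mapP f A) = stdP A := by
  rw [stdP_eq_mapP, stdP_eq_mapP, mapP_mapP]
  apply mapP_congr
  intro x hx
  show stdFun (ground (mapP f A)) (f x) = stdFun (ground A) x
  rw [ground_mapP]
  unfold stdFun
  congr 1
  have key : ((ground A).image f).filter (· < f x) = ((ground A).filter (· < x)).image f := by
    ext y
    simp only [Finset.mem_filter, Finset.mem_image]
    constructor
    · rintro ⟨⟨z, hz, rfl⟩, hlt⟩
      refine ⟨z, ⟨hz, ?_⟩, rfl⟩
      by_contra hc
      push_neg at hc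
      exact absurd (hf.monotoneOn (Finset.mem_coe.2 hx) (Finset.mem_coe.2 hz) hc) (not_le.2 hlt)
    · rintro ⟨z, ⟨hz, hlt⟩, rfl⟩
      exact ⟨⟨z, hz, rfl⟩, hf (Finset.mem_coe.2 hz) (Finset.mem_coe.2 hx) hlt⟩
  rw [key, Finset.card_image_of_injOn (hf.injOn.mono (by
    intro y hy
    simp only [Finset.coe_filter, Set.mem_setOf_eq] at hy
    exact Finset.mem_coe.2 hy.1))]

lemma card_seg (m : ℕ) : (seg m).card = m := by
  simp [seg, Nat.card_Icc]

lemma stdFun_seg {m x : ℕ} (hx : x ∈ seg m) : stdFun (seg m) x = x := by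
  rw [stdFun_eq_rk hx]
  unfold rk
  simp only [seg, Finset.mem_Icc] at hx
  have : (seg m).filter (· ≤ x) = Finset.Icc 1 x := by
    ext y
    simp only [seg, Finset.mem_filter, Finset.mem_Icc]
    omega
  rw [this, Nat.card_Icc]
  omega

/-- Packed partition : a set partition of `[m]`. -/
def PP (A : Blocks) (m : ℕ) : Prop := Good A ∧ ground A = seg m

lemma PP.empty : PP (∅ : Blocks) 0 := ⟨Good.empty, by simp [ground_empty, seg]⟩

lemma PP.stdP_self {A : Blocks} {m : ℕ} (h : PP A m) : stdP A = A := by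
  rw [stdP_eq_mapP]
  have : mapP (stdFun (ground A)) A = mapP id A := by
    apply mapP_congr
    intro x hx
    rw [h.2] at hx ⊢
    exact stdFun_seg hx
  rw [this, mapP_id]

lemma PP.stdP {A : Blocks} (hA : Good A) : PP (stdP A) (ground A).card :=
  ⟨hA.stdP, ground_stdP A⟩

lemma PP.mem_ground {A : Blocks} {m : ℕ} (h : PP A m) {x : ℕ} (hx : x ∈ ground A) :
    1 ≤ x ∧ x ≤ m := by
  rw [h.2] at hx
  simpa [seg, Finset.mem_Icc] using hx

end NCAux
namespace NCAux

/-! ### shift lemmas -/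

lemma add_strictMono (k : ℕ) : StrictMono (· + k : ℕ → ℕ) := fun _ _ h => Nat.add_lt_add_right h k

lemma ground_shiftP (A : Blocks) (k : ℕ) : ground (shiftP A k) = (ground A).image (· + k) := by
  rw [shiftP_eq_mapP]; exact ground_mapP _ _

lemma Good.shiftP {A : Blocks} (hA : Good A) (k : ℕ) : Good (shiftP A k) := by
  rw [shiftP_eq_mapP]; exact hA.mapP ((add_strictMono k).injective.injOn.mono (Set.subset_univ _))

lemma card_shiftP (A : Blocks) (k : ℕ) : (shiftP A k).card = A.card := by
  rw [shiftP_eq_mapP]; exact card_mapP ((add_strictMono k).injective.injOn.mono (Set.subset_univ _))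

lemma shiftP_zero (A : Blocks) : shiftP A 0 = A := by
  rw [shiftP_eq_mapP]
  have : mapP (· + 0) A = mapP id A := mapP_congr (by intro x _; simp)
  rw [this, mapP_id]

lemma mem_shiftP {A : Blocks} {k : ℕ} {D : Finset ℕ} :
    D ∈ shiftP A k ↔ ∃ E ∈ A, E.image (· + k) = D := by
  rw [shiftP_eq_mapP]; exact Finset.mem_image

lemma min_le_min_iff {D E : Finset ℕ} (hD : D.Nonempty) (hE : E.Nonempty) :
    D.min ≤ E.min ↔ D.min' hD ≤ E.min' hE := by
  rw [← Finset.coe_min' hD, ← Finset.coe_min' hE]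
  exact_mod_cast Iff.rfl

lemma min'_image_add {D : Finset ℕ} (hD : D.Nonempty) (k : ℕ) :
    (D.image (· + k)).min' (hD.image _) = D.min' hD + k :=
  min'_image hD (by intro x _ y _ h; show x + k ≤ y + k; omega)

lemma mem_subColl {A : Blocks} {J : Finset ℕ} {D : Finset ℕ} :
    D ∈ subColl A J ↔ ∃ i ∈ J, blockAt A i = D := Finset.mem_image

/-! ### concat lemmas -/

section Concat

variable {B C : Blocks} {mB mC : ℕ}

lemma PP.block_le (hB : PP B mB) {B' : Finset ℕ} (hB' : B' ∈ B) {x : ℕ} (hx : x ∈ B') :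
    1 ≤ x ∧ x ≤ mB :=
  hB.mem_ground (subset_ground hB' hx)

lemma shift_block_gt (hC : PP C mC) {C' : Finset ℕ} (hC' : C' ∈ shiftP C mB) {x : ℕ}
    (hx : x ∈ C') : mB < x ∧ x ≤ mB + mC := by
  obtain ⟨E, hE, rfl⟩ := mem_shiftP.1 hC'
  obtain ⟨e, he, rfl⟩ := Finset.mem_image.1 hx
  have := hC.block_le hE he
  omega

lemma disjoint_blocks_concat (hB : PP B mB) (hC : PP C mC) : Disjoint B (shiftP C mB) := by
  rw [Finset.disjoint_left]
  intro D hD hD'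
  obtain ⟨x, hx⟩ := hB.1.1 D hD
  have h1 := hB.block_le hD hx
  have h2 := shift_block_gt hC hD' hx
  omega

lemma Good.concat (hB : PP B mB) (hC : PP C mC) : Good (concatP B C) := by
  have hCg := Good.shiftP hC.1 mB
  have hmB : (ground B).card = mB := by rw [hB.2, card_seg]
  constructor
  · intro D hD
    rcases Finset.mem_union.1 hD with h | h
    · exact hB.1.1 D h
    · exact hCg.1 D (hmB ▸ h)
  · intro D hD E hE hDE
    simp only [concatP, Finset.coe_union, Set.mem_union, Finset.mem_coe, hmB] at hD hE
    have aux : ∀ D E : Finset ℕ, D ∈ B → E ∈ _root_.shiftP C mB → Disjoint (id D) (id E) := by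
      intro D E hD hE
      simp only [id]
      rw [Finset.disjoint_left]
      intro x hx hx'
      have := hB.block_le hD hx
      have := shift_block_gt hC hE hx'
      omega
    rcases hD with hD | hD <;> rcases hE with hE | hE
    · exact hB.1.2 hD hE hDE
    · exact aux D E hD hE
    · exact (aux E D hE hD).symm
    · exact hCg.2 hD hE hDE
end Concat

section Concat2

variable {B C : Blocks} {mB mC : ℕ}

lemma ground_concat (hB : PP B mB) (hC : PP C mC) :
    ground (concatP B C) = seg (mB + mC) := by
  have hmB : (ground B).card = mB := by rw [hB.2, card_seg]
  unfold concatP ground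
  rw [Finset.sup_union]
  show ground B ∪ ground (shiftP C (ground B).card) = _
  rw [hmB, ground_shiftP, hB.2, hC.2]
  ext y
  simp only [Finset.mem_union, Finset.mem_image, seg, Finset.mem_Icc]
  constructor
  · rintro (h | ⟨c, hc, rfl⟩) <;> omega
  · intro h
    rcases le_or_gt y mB with h' | h'
    · left; omega
    · right; exact ⟨y - mB, by omega, by omega⟩

lemma PP.concat (hB : PP B mB) (hC : PP C mC) : PP (concatP B C) (mB + mC) :=
  ⟨Good.concat hB hC, ground_concat hB hC⟩

lemma card_concat (hB : PP B mB) (hC : PP C mC) :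
    (concatP B C).card = B.card + C.card := by
  have hmB : (ground B).card = mB := by rw [hB.2, card_seg]
  unfold concatP
  rw [hmB, Finset.card_union_of_disjoint (disjoint_blocks_concat hB hC), card_shiftP]

lemma rnk_concat_left (hB : PP B mB) (hC : PP C mC) {B' : Finset ℕ} (hB' : B' ∈ B) :
    rnk (concatP B C) B' = rnk B B' := by
  have hmB : (ground B).card = mB := by rw [hB.2, card_seg]
  unfold rnk concatP
  rw [hmB, Finset.filter_union]
  have h2 : (shiftP C mB).filter (fun C' => C'.min ≤ B'.min) = ∅ := by
    rw [Finset.filter_eq_empty_iff]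
    intro C' hC'
    have hC'ne : C'.Nonempty := (Good.shiftP hC.1 mB).1 C' hC'
    have hB'ne : B'.Nonempty := hB.1.1 B' hB'
    rw [min_le_min_iff hC'ne hB'ne]
    have := shift_block_gt (mB := mB) hC hC' (Finset.min'_mem C' hC'ne)
    have := hB.block_le hB' (Finset.min'_mem B' hB'ne)
    omega
  rw [h2, Finset.union_empty]

lemma rnk_concat_right (hB : PP B mB) (hC : PP C mC) {C' : Finset ℕ} (hC' : C' ∈ C) :
    rnk (concatP B C) (C'.image (· + mB)) = B.card + rnk C C' := by
  have hmB : (ground B).card = mB := by rw [hB.2, card_seg]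
  have hC'ne : C'.Nonempty := hC.1.1 C' hC'
  have hCshift' : C'.image (· + mB) ∈ shiftP C mB := mem_shiftP.2 ⟨C', hC', rfl⟩
  unfold rnk concatP
  rw [hmB, Finset.filter_union]
  have h1 : B.filter (fun D => D.min ≤ (C'.image (· + mB)).min) = B := by
    rw [Finset.filter_eq_self]
    intro D hD
    have hDne : D.Nonempty := hB.1.1 D hD
    rw [min_le_min_iff hDne (hC'ne.image _), min'_image_add hC'ne]
    have := hB.block_le hD (Finset.min'_mem D hDne)
    have := hC.block_le hC' (Finset.min'_mem C' hC'ne)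
    omega
  have h2 : (shiftP C mB).filter (fun D => D.min ≤ (C'.image (· + mB)).min)
      = shiftP (C.filter fun D => D.min ≤ C'.min) mB := by
    ext D'
    simp only [Finset.mem_filter, mem_shiftP]
    constructor
    · rintro ⟨⟨E, hE, rfl⟩, hle⟩
      refine ⟨E, ⟨hE, ?_⟩, rfl⟩
      have hEne : E.Nonempty := hC.1.1 E hE
      rw [min_le_min_iff (hEne.image _) (hC'ne.image _), min'_image_add hEne,
        min'_image_add hC'ne] at hle
      rw [min_le_min_iff hEne hC'ne]
      omega
    · rintro ⟨E, ⟨hE, hle⟩, rfl⟩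
      refine ⟨⟨E, hE, rfl⟩, ?_⟩
      have hEne : E.Nonempty := hC.1.1 E hE
      rw [min_le_min_iff hEne hC'ne] at hle
      rw [min_le_min_iff (hEne.image _) (hC'ne.image _), min'_image_add hEne,
        min'_image_add hC'ne]
      omega
  rw [h1, h2]
  rw [Finset.card_union_of_disjoint (Finset.disjoint_of_subset_right
    (by rw [shiftP_eq_mapP, shiftP_eq_mapP]
        exact Finset.image_subset_image (Finset.filter_subset _ _))
    (disjoint_blocks_concat hB hC))]
  congr 1
  rw [card_shiftP]

lemma blockAt_concat_left (hB : PP B mB) (hC : PP C mC) {i : ℕ} (hi : i ∈ seg B.card) :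
    blockAt (concatP B C) i = blockAt B i := by
  obtain ⟨hmem, hrnk⟩ := blockAt_mem hB.1 hi
  conv_lhs => rw [← hrnk, ← rnk_concat_left hB hC hmem]
  exact blockAt_rnk (Good.concat hB hC) (Finset.mem_union_left _ hmem)

lemma blockAt_concat_right (hB : PP B mB) (hC : PP C mC) {i : ℕ}
    (h1 : B.card < i) (h2 : i ≤ B.card + C.card) :
    blockAt (concatP B C) i = (blockAt C (i - B.card)).image (· + mB) := by
  have hmB : (ground B).card = mB := by rw [hB.2, card_seg]
  have hi' : i - B.card ∈ seg C.card := by simp only [seg, Finset.mem_Icc]; omega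
  obtain ⟨hmem, hrnk⟩ := blockAt_mem hC.1 hi'
  have : rnk (concatP B C) ((blockAt C (i - B.card)).image (· + mB)) = i := by
    rw [rnk_concat_right hB hC hmem, hrnk]; omega
  conv_lhs => rw [← this]
  apply blockAt_rnk (Good.concat hB hC)
  apply Finset.mem_union_right
  rw [hmB]
  exact mem_shiftP.2 ⟨_, hmem, rfl⟩

lemma subColl_concat (hB : PP B mB) (hC : PP C mC) {K : Finset ℕ}
    (hK : K ⊆ seg (B.card + C.card)) :
    subColl (concatP B C) K = subColl B (K.filter (· ≤ B.card)) ∪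
      shiftP (subColl C ((K.filter (fun j => B.card < j)).image (· - B.card))) mB := by
  ext D
  show D ∈ K.image (blockAt (concatP B C)) ↔ _
  simp only [Finset.mem_union, mem_shiftP, Finset.mem_image]
  constructor
  · rintro ⟨k, hk, rfl⟩
    have hk' : 1 ≤ k ∧ k ≤ B.card + C.card := by
      have := hK hk; simpa [seg, Finset.mem_Icc] using this
    rcases le_or_gt k B.card with h | h
    · left
      exact mem_subColl.2 ⟨k, Finset.mem_filter.2 ⟨hk, h⟩, (blockAt_concat_left hB hC (by
        simp only [seg, Finset.mem_Icc]; omega)).symm⟩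
    · right
      exact ⟨blockAt C (k - B.card),
        mem_subColl.2 ⟨k - B.card,
          Finset.mem_image.2 ⟨k, Finset.mem_filter.2 ⟨hk, h⟩, rfl⟩, rfl⟩,
        (blockAt_concat_right hB hC h hk'.2).symm⟩
  · rintro (hD | ⟨E, hE, rfl⟩)
    · obtain ⟨k, hk, rfl⟩ := mem_subColl.1 hD
      obtain ⟨hkK, hkle⟩ := Finset.mem_filter.1 hk
      have hk' : 1 ≤ k := by
        have := hK hkK; simp only [seg, Finset.mem_Icc] at this; omega
      exact ⟨k, hkK, blockAt_concat_left hB hC (by simp only [seg, Finset.mem_Icc]; omega)⟩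
    · obtain ⟨j, hj, rfl⟩ := mem_subColl.1 hE
      obtain ⟨k, hk, rfl⟩ := Finset.mem_image.1 hj
      obtain ⟨hkK, hkgt⟩ := Finset.mem_filter.1 hk
      have hk' : k ≤ B.card + C.card := by
        have := hK hkK; simp only [seg, Finset.mem_Icc] at this; omega
      exact ⟨k, hkK, blockAt_concat_right hB hC hkgt hk'⟩

end Concat2

end NCAux
namespace NCAux

/-! ### standardization of a layered union -/

lemma mapP_union (f : ℕ → ℕ) (A B : Blocks) : mapP f (A ∪ B) = mapP f A ∪ mapP f B :=
  Finset.image_union _ _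

lemma std_layered {D E : Blocks} {m : ℕ} (hD : Good D) (hE : Good E)
    (hDm : ground D ⊆ seg m) (hE1 : ∀ x ∈ ground E, 1 ≤ x) :
    stdP (D ∪ shiftP E m) = concatP (stdP D) (stdP E) := by
  set d := (ground D).card with hd
  have hgU : ground (D ∪ shiftP E m) = ground D ∪ (ground E).image (· + m) := by
    unfold ground
    rw [Finset.sup_union]
    show ground D ∪ ground (shiftP E m) = _
    rw [ground_shiftP]
    rfl
  have hDle : ∀ x ∈ ground D, x ≤ m := by
    intro x hx
    have := hDm hx
    simp only [seg, Finset.mem_Icc] at this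
    omega
  have h1 : ∀ x ∈ ground D, stdFun (ground (D ∪ shiftP E m)) x = stdFun (ground D) x := by
    intro x hx
    unfold stdFun
    have key : (ground (D ∪ shiftP E m)).filter (· < x) = (ground D).filter (· < x) := by
      rw [hgU]
      ext y
      simp only [Finset.mem_filter, Finset.mem_union, Finset.mem_image]
      constructor
      · rintro ⟨h | ⟨e, he, rfl⟩, hlt⟩
        · exact ⟨h, hlt⟩
        · have := hE1 e he
          have := hDle x hx
          omega
      · rintro ⟨h, hlt⟩
        exact ⟨Or.inl h, hlt⟩
    rw [key]
  have h2 : ∀ e ∈ ground E,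
      stdFun (ground (D ∪ shiftP E m)) (e + m) = stdFun (ground E) e + d := by
    intro e he
    unfold stdFun
    have key : (ground (D ∪ shiftP E m)).filter (· < e + m)
        = ground D ∪ ((ground E).filter (· < e)).image (· + m) := by
      rw [hgU]
      ext y
      simp only [Finset.mem_filter, Finset.mem_union, Finset.mem_image]
      constructor
      · rintro ⟨h | ⟨e', he', rfl⟩, hlt⟩
        · exact Or.inl h
        · exact Or.inr ⟨e', ⟨he', by omega⟩, rfl⟩
      · rintro (h | ⟨e', ⟨he', hlt⟩, rfl⟩)
        · have := hDle y h
          have := hE1 e he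
          exact ⟨Or.inl h, by omega⟩
        · exact ⟨Or.inr ⟨e', he', rfl⟩, by omega⟩
    rw [key, Finset.card_union_of_disjoint (by
      rw [Finset.disjoint_left]
      intro y hy hy'
      obtain ⟨e', he', heq⟩ := Finset.mem_image.1 hy'
      have hh1 := hDle y hy
      have hh2 := hE1 e' (Finset.mem_filter.1 he').1
      omega)]
    rw [Finset.card_image_of_injOn ((add_strictMono m).injective.injOn.mono (Set.subset_univ _))]
    omega
  rw [stdP_eq_mapP, mapP_union]
  have part1 : mapP (stdFun (ground (D ∪ shiftP E m))) D = stdP D := by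
    rw [stdP_eq_mapP]
    exact mapP_congr h1
  have part2 : mapP (stdFun (ground (D ∪ shiftP E m))) (shiftP E m) = shiftP (stdP E) d := by
    rw [shiftP_eq_mapP E m, mapP_mapP, shiftP_eq_mapP (stdP E) d, stdP_eq_mapP E, mapP_mapP]
    apply mapP_congr
    intro x hx
    show stdFun (ground (D ∪ shiftP E m)) (x + m) = stdFun (ground E) x + d
    exact h2 x hx
  rw [part1, part2]
  unfold concatP
  rw [ground_stdP, card_seg]

/-! ### applyComp basics -/

lemma applyComp_nil (A : Blocks) : applyComp [] A = ∅ := rfl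

lemma applyComp_cons (g : Finset ℕ) (γ : SComp) (A : Blocks) :
    applyComp (g :: γ) A = concatP (stdP (subColl A g)) (applyComp γ A) := rfl

lemma stdP_empty : stdP (∅ : Blocks) = ∅ := rfl

lemma concat_empty_left (B : Blocks) : concatP ∅ B = B := by
  unfold concatP
  rw [ground_empty]
  show ∅ ∪ shiftP B 0 = B
  rw [shiftP_zero, Finset.empty_union]

lemma applyComp_empty_letter (γ : SComp) (A : Blocks) :
    applyComp (∅ :: γ) A = applyComp γ A := by
  rw [applyComp_cons, subColl_empty, stdP_empty, concat_empty_left]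

lemma applyComp_PP {A : Blocks} (hA : Good A) :
    ∀ γ : SComp, (∀ g ∈ γ, g ⊆ seg A.card) →
      (∃ m, PP (applyComp γ A) m) ∧ (applyComp γ A).card = (γ.map Finset.card).sum := by
  intro γ
  induction γ with
  | nil => intro _; exact ⟨⟨0, PP.empty⟩, rfl⟩
  | cons g γ ih =>
      intro hsub
      have hg : g ⊆ seg A.card := hsub g (List.mem_cons_self)
      obtain ⟨⟨mC, hC⟩, hcard⟩ := ih (fun x hx => hsub x (List.mem_cons_of_mem g hx))
      have hX : Good (subColl A g) := hA.subColl hg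
      have hBg : PP (stdP (subColl A g)) (ground (subColl A g)).card := PP.stdP hX
      rw [applyComp_cons]
      constructor
      · exact ⟨_, hBg.concat hC⟩
      · rw [card_concat hBg hC, hcard, card_stdP hX, card_subColl hA hg]
        simp

/-! ### the key restriction lemma -/

def restr : SComp → Finset ℕ → SComp
  | [], _ => []
  | g :: γ, K => (g.filter fun i => rk g i ∈ K) ::
      restr γ ((K.filter fun j => g.card < j).image (· - g.card))

lemma std_subColl_std {X : Blocks} (hX : Good X) {K : Finset ℕ} (hK : K ⊆ seg X.card) :
    stdP (subColl (stdP X) K) = stdP (subColl X K) := by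
  have h1 : subColl (stdP X) K = mapP (stdFun (ground X)) (subColl X K) := by
    rw [stdP_eq_mapP X]
    exact subColl_mapP hX (stdFun_strictMonoOn (ground X)) hK
  rw [h1]
  exact std_mapP (hX.subColl hK) ((stdFun_strictMonoOn (ground X)).mono
    (by exact_mod_cast ground_subColl_subset hX hK))

theorem main_restr {A : Blocks} (hA : Good A) :
    ∀ γ : SComp, (∀ g ∈ γ, g ⊆ seg A.card) →
      ∀ K ⊆ seg (applyComp γ A).card,
        stdP (subColl (applyComp γ A) K) = applyComp (restr γ K) A := by
  intro γ
  induction γ with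
  | nil =>
      intro _ K hK
      have : K = ∅ := by
        rw [applyComp_nil] at hK
        simpa [seg] using Finset.subset_empty.1 (by simpa [seg] using hK)
      subst this
      rfl
  | cons g γ ih =>
      intro hsub K hK
      have hg : g ⊆ seg A.card := hsub g (List.mem_cons_self)
      have hX : Good (subColl A g) := hA.subColl hg
      set Bg := stdP (subColl A g) with hBgdef
      have hBg : PP Bg (ground (subColl A g)).card := PP.stdP hX
      obtain ⟨⟨mC, hC⟩, _⟩ := applyComp_PP hA γ (fun x hx => hsub x (List.mem_cons_of_mem g hx))
      have hcardBg : Bg.card = g.card := by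
        rw [hBgdef, card_stdP hX, card_subColl hA hg]
      rw [applyComp_cons] at hK ⊢
      rw [card_concat hBg hC] at hK
      set K₁ := K.filter (· ≤ Bg.card) with hK1
      set K₂ := (K.filter fun j => Bg.card < j).image (· - Bg.card) with hK2
      have hKseg : ∀ k ∈ K, 1 ≤ k ∧ k ≤ Bg.card + (applyComp γ A).card := by
        intro k hk
        have := hK hk
        simpa [seg, Finset.mem_Icc] using this
      have hK1seg : K₁ ⊆ seg Bg.card := by
        intro k hk
        obtain ⟨hkK, hkle⟩ := Finset.mem_filter.1 hk
        simp only [seg, Finset.mem_Icc]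
        exact ⟨(hKseg k hkK).1, hkle⟩
      have hK2seg : K₂ ⊆ seg (applyComp γ A).card := by
        intro j hj
        obtain ⟨k, hk, rfl⟩ := Finset.mem_image.1 hj
        obtain ⟨hkK, hkgt⟩ := Finset.mem_filter.1 hk
        have := hKseg k hkK
        simp only [seg, Finset.mem_Icc]
        omega
      rw [subColl_concat hBg hC hK]
      rw [std_layered (hBg.1.subColl hK1seg) (hC.1.subColl hK2seg)
        (by rw [← hBg.2]; exact ground_subColl_subset hBg.1 hK1seg)
        (by
          intro x hx
          have := ground_subColl_subset hC.1 hK2seg hx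
          rw [hC.2] at this
          simp only [seg, Finset.mem_Icc] at this
          exact this.1)]
      have t1 : stdP (subColl Bg K₁) = stdP (subColl A (g.filter fun i => rk g i ∈ K)) := by
        rw [hBgdef, std_subColl_std hX (by rw [card_subColl hA hg, ← hcardBg]; exact hK1seg)]
        rw [subColl_subColl hA hg (by rw [← hcardBg]; exact hK1seg)]
        have hfc : (g.filter fun i => rk g i ∈ K₁) = (g.filter fun i => rk g i ∈ K) := by
          apply Finset.filter_congr
          intro i hi
          have hrk1 : 1 ≤ rk g i := one_le_rk hi
          have hrk2 : rk g i ≤ g.card := rk_le_card g i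
          simp only [hK1, Finset.mem_filter, hcardBg]
          constructor
          · intro h; exact h.1
          · intro h; exact ⟨h, hrk2⟩
        rw [hfc]
      have t2 : stdP (subColl (applyComp γ A) K₂) = applyComp (restr γ K₂) A :=
        ih (fun x hx => hsub x (List.mem_cons_of_mem g hx)) K₂ hK2seg
      rw [t1, t2]
      show _ = applyComp ((g.filter fun i => rk g i ∈ K) ::
        restr γ ((K.filter fun j => g.card < j).image (· - g.card))) A
      rw [applyComp_cons]
      congr 2 <;> rw [hK2, hcardBg]

end NCAux
namespace NCAux

/-! ### sunion facts -/

lemma sunion_nil : sunion [] = ∅ := rfl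

lemma sunion_cons (g : Finset ℕ) (γ : SComp) : sunion (g :: γ) = g ∪ sunion γ := rfl

lemma subset_sunion {γ : SComp} {g : Finset ℕ} (hg : g ∈ γ) : g ⊆ sunion γ := by
  induction γ with
  | nil => cases hg
  | cons h γ ih =>
      rcases List.mem_cons.1 hg with rfl | hg'
      · rw [sunion_cons]; exact Finset.subset_union_left
      · rw [sunion_cons]; exact (ih hg').trans Finset.subset_union_right

lemma disjoint_sunion {γ : SComp} {g : Finset ℕ} (h : ∀ x ∈ γ, Disjoint g x) :
    Disjoint g (sunion γ) := by
  induction γ with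
  | nil => simp [sunion_nil]
  | cons x γ ih =>
      rw [sunion_cons, Finset.disjoint_union_right]
      exact ⟨h x (List.mem_cons_self), ih (fun y hy => h y (List.mem_cons_of_mem x hy))⟩

lemma card_sunion {γ : SComp} (hpd : γ.Pairwise Disjoint) :
    (sunion γ).card = (γ.map Finset.card).sum := by
  induction γ with
  | nil => simp [sunion_nil]
  | cons g γ ih =>
      rw [sunion_cons, List.map_cons, List.sum_cons,
        Finset.card_union_of_disjoint (disjoint_sunion (List.pairwise_cons.1 hpd).1),
        ih (List.pairwise_cons.1 hpd).2]

/-! ### the map ψ -/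

def psi (γ : SComp) (K : Finset ℕ) : Finset ℕ := sunion (restr γ K)

lemma restr_nil (K : Finset ℕ) : restr [] K = [] := rfl

lemma restr_cons (g : Finset ℕ) (γ : SComp) (K : Finset ℕ) :
    restr (g :: γ) K = (g.filter fun i => rk g i ∈ K) ::
      restr γ ((K.filter fun j => g.card < j).image (· - g.card)) := rfl

lemma psi_nil (K : Finset ℕ) : psi [] K = ∅ := rfl

lemma psi_cons (g : Finset ℕ) (γ : SComp) (K : Finset ℕ) :
    psi (g :: γ) K = (g.filter fun i => rk g i ∈ K) ∪
      psi γ ((K.filter fun j => g.card < j).image (· - g.card)) := rfl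

lemma psi_subset (γ : SComp) (K : Finset ℕ) : psi γ K ⊆ sunion γ := by
  induction γ generalizing K with
  | nil => simp [psi_nil]
  | cons g γ ih =>
      rw [psi_cons, sunion_cons]
      exact Finset.union_subset_union (Finset.filter_subset _ _) (ih _)

lemma psi_empty (γ : SComp) : psi γ ∅ = ∅ := by
  induction γ with
  | nil => rfl
  | cons g γ ih =>
      rw [psi_cons]
      simp only [Finset.notMem_empty, Finset.filter_false, Finset.filter_empty,
        Finset.image_empty, ih, Finset.empty_union]

lemma restr_eq_inter {γ : SComp} (hpd : γ.Pairwise Disjoint) (K : Finset ℕ) :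
    restr γ K = γ.map (· ∩ psi γ K) := by
  induction γ generalizing K with
  | nil => rfl
  | cons g γ ih =>
      obtain ⟨hgd, hpd'⟩ := List.pairwise_cons.1 hpd
      set K₂ := (K.filter fun j => g.card < j).image (· - g.card) with hK2
      have hdisj : Disjoint g (sunion γ) := disjoint_sunion hgd
      rw [restr_cons, psi_cons, List.map_cons]
      congr 1
      · rw [Finset.inter_union_distrib_left]
        have e1 : g ∩ (g.filter fun i => rk g i ∈ K) = g.filter fun i => rk g i ∈ K :=
          Finset.inter_eq_right.2 (Finset.filter_subset _ _)
        have e2 : g ∩ psi γ K₂ = ∅ := by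
          rw [← Finset.disjoint_iff_inter_eq_empty]
          exact Finset.disjoint_of_subset_right (psi_subset γ K₂) hdisj
        rw [e1, e2, Finset.union_empty]
      · rw [ih hpd' K₂]
        apply List.map_congr_left
        intro h hh
        have : h ∩ (g.filter fun i => rk g i ∈ K) = ∅ := by
          rw [← Finset.disjoint_iff_inter_eq_empty]
          exact Finset.disjoint_of_subset_right (Finset.filter_subset _ _) (hgd h hh).symm
        rw [Finset.inter_union_distrib_left, this, Finset.empty_union]

lemma K2_compl {g : Finset ℕ} {S : ℕ} (K : Finset ℕ) :
    ((seg (g.card + S) \ K).filter fun j => g.card < j).image (· - g.card)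
      = seg S \ (K.filter fun j => g.card < j).image (· - g.card) := by
  ext j
  simp only [Finset.mem_image, Finset.mem_filter, Finset.mem_sdiff, seg, Finset.mem_Icc]
  constructor
  · rintro ⟨k, ⟨⟨⟨hk1, hk2⟩, hkK⟩, hkg⟩, rfl⟩
    refine ⟨⟨by omega, by omega⟩, ?_⟩
    rintro ⟨k', ⟨hk'K, hk'g⟩, hk'⟩
    have : k' = k := by omega
    exact hkK (this ▸ hk'K)
  · rintro ⟨⟨hj1, hj2⟩, hnot⟩
    refine ⟨j + g.card, ⟨⟨⟨by omega, by omega⟩, ?_⟩, by omega⟩, by omega⟩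
    intro hmem
    exact hnot ⟨j + g.card, ⟨hmem, by omega⟩, by omega⟩

lemma psi_compl {γ : SComp} (hpd : γ.Pairwise Disjoint) {K : Finset ℕ}
    (hK : K ⊆ seg ((γ.map Finset.card).sum)) :
    psi γ (seg ((γ.map Finset.card).sum) \ K) = sunion γ \ psi γ K := by
  induction γ generalizing K with
  | nil => simp [psi_nil, sunion_nil]
  | cons g γ ih =>
      obtain ⟨hgd, hpd'⟩ := List.pairwise_cons.1 hpd
      have hdisj : Disjoint g (sunion γ) := disjoint_sunion hgd
      set S := (γ.map Finset.card).sum with hS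
      have hT : ((g :: γ).map Finset.card).sum = g.card + S := by simp [hS]
      rw [hT] at hK ⊢
      set K₂ := (K.filter fun j => g.card < j).image (· - g.card) with hK2
      have hK2seg : K₂ ⊆ seg S := by
        intro j hj
        obtain ⟨k, hk, rfl⟩ := Finset.mem_image.1 hj
        obtain ⟨hkK, hkg⟩ := Finset.mem_filter.1 hk
        have := hK hkK
        simp only [seg, Finset.mem_Icc] at this ⊢
        omega
      rw [psi_cons, psi_cons, ← hK2, K2_compl K, ih hpd' hK2seg, sunion_cons]
      have hfilter : (g.filter fun i => rk g i ∈ seg (g.card + S) \ K)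
          = g.filter fun i => rk g i ∉ K := by
        apply Finset.filter_congr
        intro i hi
        have h1 : 1 ≤ rk g i := one_le_rk hi
        have h2 : rk g i ≤ g.card := rk_le_card g i
        simp only [Finset.mem_sdiff, seg, Finset.mem_Icc]
        constructor
        · intro h; exact h.2
        · intro h; exact ⟨⟨by omega, by omega⟩, h⟩
      rw [hfilter]
      ext x
      simp only [Finset.mem_union, Finset.mem_filter, Finset.mem_sdiff]
      constructor
      · rintro (⟨hxg, hxK⟩ | ⟨hx1, hx2⟩)
        · refine ⟨Or.inl hxg, ?_⟩
          rintro (h | h)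
          · exact hxK h.2
          · exact (Finset.disjoint_left.1 hdisj) hxg (psi_subset γ K₂ h)
        · refine ⟨Or.inr hx1, ?_⟩
          rintro (h | h)
          · exact (Finset.disjoint_left.1 hdisj) h.1 hx1
          · exact hx2 h
      · rintro ⟨hx1 | hx1, hx2⟩
        · left
          exact ⟨hx1, fun hK' => hx2 (Or.inl ⟨hx1, hK'⟩)⟩
        · right
          exact ⟨hx1, fun h => hx2 (Or.inr h)⟩

lemma psi_full {γ : SComp} (hpd : γ.Pairwise Disjoint) :
    psi γ (seg ((γ.map Finset.card).sum)) = sunion γ := by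
  have := psi_compl hpd (K := ∅) (by simp)
  rw [psi_empty, Finset.sdiff_empty, Finset.sdiff_empty] at this
  exact this

lemma psi_injOn {γ : SComp} (hpd : γ.Pairwise Disjoint) :
    ∀ K ⊆ seg ((γ.map Finset.card).sum), ∀ K' ⊆ seg ((γ.map Finset.card).sum),
      psi γ K = psi γ K' → K = K' := by
  induction γ with
  | nil =>
      intro K hK K' hK' _
      simp only [List.map_nil, List.sum_nil] at hK hK'
      have h1 : K = ∅ := Finset.subset_empty.1 (by simpa [seg] using hK)
      have h2 : K' = ∅ := Finset.subset_empty.1 (by simpa [seg] using hK')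
      rw [h1, h2]
  | cons g γ ih =>
      intro K hK K' hK' heq
      obtain ⟨hgd, hpd'⟩ := List.pairwise_cons.1 (by exact hpd)
      have hdisj : Disjoint g (sunion γ) := disjoint_sunion hgd
      set S := (γ.map Finset.card).sum with hS
      have hT : ((g :: γ).map Finset.card).sum = g.card + S := by simp [hS]
      rw [hT] at hK hK'
      rw [psi_cons, psi_cons] at heq
      set L := g.filter fun i => rk g i ∈ K with hL
      set L' := g.filter fun i => rk g i ∈ K' with hL'
      set K₂ := (K.filter fun j => g.card < j).image (· - g.card) with hK2
      set K₂' := (K'.filter fun j => g.card < j).image (· - g.card) with hK2'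
      have hK2seg : K₂ ⊆ seg S := by
        intro j hj
        obtain ⟨k, hk, rfl⟩ := Finset.mem_image.1 hj
        obtain ⟨hkK, hkg⟩ := Finset.mem_filter.1 hk
        have := hK hkK
        simp only [seg, Finset.mem_Icc] at this ⊢
        omega
      have hK2seg' : K₂' ⊆ seg S := by
        intro j hj
        obtain ⟨k, hk, rfl⟩ := Finset.mem_image.1 hj
        obtain ⟨hkK, hkg⟩ := Finset.mem_filter.1 hk
        have := hK' hkK
        simp only [seg, Finset.mem_Icc] at this ⊢
        omega
      -- separate the two parts
      have hLsub : L ⊆ g := Finset.filter_subset _ _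
      have hLsub' : L' ⊆ g := Finset.filter_subset _ _
      have hpsisub : psi γ K₂ ⊆ sunion γ := psi_subset _ _
      have hpsisub' : psi γ K₂' ⊆ sunion γ := psi_subset _ _
      have part1 : L = L' := by
        have e1 : (L ∪ psi γ K₂) ∩ g = L := by
          rw [Finset.union_inter_distrib_right, Finset.inter_eq_left.2 hLsub,
            (Finset.disjoint_iff_inter_eq_empty.1
              (Finset.disjoint_of_subset_left hpsisub hdisj.symm)), Finset.union_empty]
        have e2 : (L' ∪ psi γ K₂') ∩ g = L' := by
          rw [Finset.union_inter_distrib_right, Finset.inter_eq_left.2 hLsub',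
            (Finset.disjoint_iff_inter_eq_empty.1
              (Finset.disjoint_of_subset_left hpsisub' hdisj.symm)), Finset.union_empty]
        rw [← e1, ← e2, heq]
      have part2 : psi γ K₂ = psi γ K₂' := by
        have e1 : (L ∪ psi γ K₂) \ g = psi γ K₂ := by
          rw [Finset.union_sdiff_distrib, Finset.sdiff_eq_empty_iff_subset.2 hLsub,
            Finset.empty_union]
          exact Finset.sdiff_eq_self_of_disjoint
            (Finset.disjoint_of_subset_left hpsisub hdisj.symm)
        have e2 : (L' ∪ psi γ K₂') \ g = psi γ K₂' := by
          rw [Finset.union_sdiff_distrib, Finset.sdiff_eq_empty_iff_subset.2 hLsub',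
            Finset.empty_union]
          exact Finset.sdiff_eq_self_of_disjoint
            (Finset.disjoint_of_subset_left hpsisub' hdisj.symm)
        rw [← e1, ← e2, heq]
      have hrec : K₂ = K₂' := ih hpd' K₂ hK2seg K₂' hK2seg' part2
      -- recover the low parts
      have low : K.filter (· ≤ g.card) = K'.filter (· ≤ g.card) := by
        have recover : ∀ M : Finset ℕ, M ⊆ seg (g.card + S) →
            M.filter (· ≤ g.card) = (g.filter fun i => rk g i ∈ M).image (rk g) := by
          intro M hM
          ext j
          simp only [Finset.mem_filter, Finset.mem_image]
          constructor
          · rintro ⟨hjM, hjle⟩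
            have hj1 : 1 ≤ j := by
              have := hM hjM; simp only [seg, Finset.mem_Icc] at this; omega
            obtain ⟨i, hi, hrk⟩ := rk_surj (S := g) hj1 hjle
            exact ⟨i, ⟨hi, by rw [hrk]; exact hjM⟩, hrk⟩
          · rintro ⟨i, ⟨hig, hirk⟩, rfl⟩
            exact ⟨hirk, rk_le_card g i⟩
        rw [recover K hK, recover K' hK', ← hL, ← hL', part1]
      have high : K.filter (fun j => g.card < j) = K'.filter (fun j => g.card < j) := by
        have recover : ∀ M : Finset ℕ,
            M.filter (fun j => g.card < j) =
              ((M.filter fun j => g.card < j).image (· - g.card)).image (· + g.card) := by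
          intro M
          ext k
          simp only [Finset.mem_image, Finset.mem_filter]
          constructor
          · rintro ⟨hkM, hkg⟩
            exact ⟨k - g.card, ⟨k, ⟨hkM, hkg⟩, rfl⟩, by omega⟩
          · rintro ⟨j, ⟨k', ⟨hk'M, hk'g⟩, rfl⟩, rfl⟩
            have : k' - g.card + g.card = k' := by omega
            rw [this]
            exact ⟨hk'M, hk'g⟩
        rw [recover K, recover K', ← hK2, ← hK2', hrec]
      have split1 : K = K.filter (· ≤ g.card) ∪ K.filter (fun j => g.card < j) := by
        ext k
        simp only [Finset.mem_union, Finset.mem_filter]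
        constructor
        · intro hk
          rcases le_or_gt k g.card with h | h
          · exact Or.inl ⟨hk, h⟩
          · exact Or.inr ⟨hk, h⟩
        · rintro (⟨hk, _⟩ | ⟨hk, _⟩) <;> exact hk
      have split2 : K' = K'.filter (· ≤ g.card) ∪ K'.filter (fun j => g.card < j) := by
        ext k
        simp only [Finset.mem_union, Finset.mem_filter]
        constructor
        · intro hk
          rcases le_or_gt k g.card with h | h
          · exact Or.inl ⟨hk, h⟩
          · exact Or.inr ⟨hk, h⟩
        · rintro (⟨hk, _⟩ | ⟨hk, _⟩) <;> exact hk
      rw [split1, split2, low, high]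

end NCAux
namespace NCAux

/-! ### the involution φ -/

def phi (P Q : Finset ℕ) : SComp → SComp
  | [] => []
  | [g] => if (g ∩ P).Nonempty ∧ (g ∩ Q).Nonempty then [g ∩ P, g ∩ Q] else [g]
  | g :: h :: L =>
    if (g ∩ P).Nonempty ∧ (g ∩ Q).Nonempty then g ∩ P :: g ∩ Q :: h :: L
    else if g ∩ Q = ∅ ∧ h ∩ P = ∅ then (g ∪ h) :: L
    else g :: phi P Q (h :: L)

variable {P Q : Finset ℕ}

lemma phi_mixed {g : Finset ℕ} (hg : (g ∩ P).Nonempty) (hq : (g ∩ Q).Nonempty)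
    (L : SComp) : phi P Q (g :: L) = g ∩ P :: g ∩ Q :: L := by
  cases L with
  | nil => simp [phi, hg, hq]
  | cons h L' => simp [phi, hg, hq]

lemma phi_merge {g h : Finset ℕ} (hmix : ¬((g ∩ P).Nonempty ∧ (g ∩ Q).Nonempty))
    (hgQ : g ∩ Q = ∅) (hhP : h ∩ P = ∅) (L : SComp) :
    phi P Q (g :: h :: L) = (g ∪ h) :: L := by
  simp [phi, hmix, hgQ, hhP]

lemma phi_else {g h : Finset ℕ} (hmix : ¬((g ∩ P).Nonempty ∧ (g ∩ Q).Nonempty))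
    (hm : ¬(g ∩ Q = ∅ ∧ h ∩ P = ∅)) (L : SComp) :
    phi P Q (g :: h :: L) = g :: phi P Q (h :: L) := by
  simp [phi, hmix, hm]

lemma inter_eq_of_subset_union {P Q : Finset ℕ} {g : Finset ℕ}
    (hsub : g ⊆ P ∪ Q) (hgQ : g ∩ Q = ∅) : g ∩ P = g := by
  apply Finset.inter_eq_left.2
  intro x hx
  rcases Finset.mem_union.1 (hsub hx) with h | h
  · exact h
  · exact absurd (Finset.mem_inter.2 ⟨hx, h⟩) (by rw [hgQ]; exact Finset.notMem_empty x)

lemma inter_union_self' {g : Finset ℕ} (hsub : g ⊆ P ∪ Q) : g ∩ P ∪ g ∩ Q = g := by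
  rw [← Finset.inter_union_distrib_left]
  exact Finset.inter_eq_left.2 hsub

lemma inter_inter_self (g R : Finset ℕ) : (g ∩ R) ∩ R = g ∩ R := by
  rw [Finset.inter_assoc, Finset.inter_self]

lemma applyComp_cons_empty (x : Finset ℕ) (M : SComp) (A : Blocks) :
    applyComp (x :: ∅ :: M) A = applyComp (x :: M) A := by
  rw [applyComp_cons, applyComp_empty_letter, applyComp_cons]

theorem phi_spec (hPQ : Disjoint P Q) :
    ∀ γ : SComp, (∀ g ∈ γ, g.Nonempty) → (∀ g ∈ γ, g ⊆ P ∪ Q) →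
      γ.Pairwise Disjoint → ((γ.headI ∩ P).Nonempty) → ((sunion γ ∩ Q).Nonempty) →
      sunion (phi P Q γ) = sunion γ
      ∧ (∀ g ∈ phi P Q γ, g.Nonempty)
      ∧ (phi P Q γ).Pairwise Disjoint
      ∧ γ.headI ∩ P ⊆ (phi P Q γ).headI
      ∧ ((phi P Q γ).length = γ.length + 1 ∨ (phi P Q γ).length + 1 = γ.length)
      ∧ phi P Q (phi P Q γ) = γ
      ∧ ∀ (A : Blocks) (R : Finset ℕ), (R = P ∨ R = Q) →
          applyComp ((phi P Q γ).map (· ∩ R)) A = applyComp (γ.map (· ∩ R)) A := by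
  have hPQ' : ∀ g : Finset ℕ, (g ∩ P) ∩ Q = ∅ := fun g => by
    rw [← Finset.disjoint_iff_inter_eq_empty]
    exact Finset.disjoint_of_subset_left Finset.inter_subset_right hPQ
  have hQP' : ∀ g : Finset ℕ, (g ∩ Q) ∩ P = ∅ := fun g => by
    rw [← Finset.disjoint_iff_inter_eq_empty]
    exact Finset.disjoint_of_subset_left Finset.inter_subset_right hPQ.symm
  intro γ
  induction γ with
  | nil =>
      intro _ _ _ h4 _
      have he : ([] : SComp).headI = ∅ := rfl
      rw [he, Finset.empty_inter] at h4
      exact absurd h4 (by simp)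
  | cons g L ih =>
      intro hne hsub hpair hhead hQne
      simp only [List.headI_cons] at hhead
      have hgsub : g ⊆ P ∪ Q := hsub g (List.mem_cons_self)
      obtain ⟨hgL, hLpair⟩ := List.pairwise_cons.1 hpair
      by_cases hmix : (g ∩ P).Nonempty ∧ (g ∩ Q).Nonempty
      · -- SPLIT case
        rw [phi_mixed hmix.1 hmix.2 L]
        have hun : g ∩ P ∪ g ∩ Q = g := inter_union_self' hgsub
        refine ⟨?_, ?_, ?_, ?_, ?_, ?_, ?_⟩
        · rw [sunion_cons, sunion_cons, sunion_cons, ← Finset.union_assoc, hun]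
        · intro x hx
          rcases List.mem_cons.1 hx with rfl | hx'
          · exact hmix.1
          · rcases List.mem_cons.1 hx' with rfl | hx''
            · exact hmix.2
            · exact hne x (List.mem_cons_of_mem g hx'')
        · refine List.pairwise_cons.2 ⟨?_, List.pairwise_cons.2 ⟨?_, hLpair⟩⟩
          · intro x hx
            rcases List.mem_cons.1 hx with rfl | hx'
            · exact hPQ.mono Finset.inter_subset_right Finset.inter_subset_right
            · exact Finset.disjoint_of_subset_left Finset.inter_subset_left (hgL x hx')
          · intro x hx
            exact Finset.disjoint_of_subset_left Finset.inter_subset_left (hgL x hx)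
        · simp only [List.headI_cons]
          exact subset_rfl
        · left; simp
        · rw [phi_merge (by
              rintro ⟨-, hc⟩
              rw [hPQ' g] at hc
              exact absurd hc (by simp)) (hPQ' g) (hQP' g) L, hun]
        · intro A R hR
          rcases hR with rfl | rfl
          · simp only [List.map_cons, inter_inter_self, hQP' g]
            rw [applyComp_cons_empty]
          · simp only [List.map_cons, inter_inter_self, hPQ' g]
            rw [applyComp_empty_letter]
      · -- not mixed: g is pure P
        have hgQ : g ∩ Q = ∅ := by
          rcases Finset.eq_empty_or_nonempty (g ∩ Q) with h | h
          · exact h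
          · exact absurd ⟨hhead, h⟩ hmix
        have hgP : g ∩ P = g := inter_eq_of_subset_union hgsub hgQ
        cases L with
        | nil =>
            exfalso
            rw [sunion_cons, sunion_nil, Finset.union_empty] at hQne
            rw [← Finset.inter_comm] at hQne
            rw [Finset.inter_comm] at hQne
            rw [hgQ] at hQne
            exact absurd hQne (by simp)
        | cons h L' =>
            have hhsub : h ⊆ P ∪ Q := hsub h (List.mem_cons_of_mem g (List.mem_cons_self))
            have hhne : h.Nonempty := hne h (List.mem_cons_of_mem g (List.mem_cons_self))
            by_cases hhP : h ∩ P = ∅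
            · -- MERGE case
              have hhQ : h ∩ Q = h := by
                apply inter_eq_of_subset_union (P := Q) (Q := P) ?_ hhP
                rwa [Finset.union_comm]
              rw [phi_merge hmix hgQ hhP L']
              obtain ⟨hhL', hL'pair⟩ := List.pairwise_cons.1 hLpair
              have e1 : (g ∪ h) ∩ P = g := by
                rw [Finset.union_inter_distrib_right, hgP, hhP, Finset.union_empty]
              have e2 : (g ∪ h) ∩ Q = h := by
                rw [Finset.union_inter_distrib_right, hgQ, hhQ, Finset.empty_union]
              refine ⟨?_, ?_, ?_, ?_, ?_, ?_, ?_⟩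
              · rw [sunion_cons, sunion_cons, sunion_cons, Finset.union_assoc]
              · intro x hx
                rcases List.mem_cons.1 hx with rfl | hx'
                · exact (hne g (List.mem_cons_self)).mono Finset.subset_union_left
                · exact hne x (List.mem_cons_of_mem g (List.mem_cons_of_mem h hx'))
              · refine List.pairwise_cons.2 ⟨?_, hL'pair⟩
                intro x hx
                exact Finset.disjoint_union_left.2
                  ⟨hgL x (List.mem_cons_of_mem h hx), hhL' x hx⟩
              · simp only [List.headI_cons]
                exact Finset.inter_subset_left.trans Finset.subset_union_left
              · right; simp
              · rw [phi_mixed (by rw [e1]; exact hne g (List.mem_cons_self))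
                  (by rw [e2]; exact hhne) L', e1, e2]
              · intro A R hR
                rcases hR with rfl | rfl
                · simp only [List.map_cons, e1, hgP, hhP]
                  rw [applyComp_cons_empty]
                · simp only [List.map_cons, e2, hgQ, hhQ]
                  rw [applyComp_empty_letter]
            · -- RECURSE case
              have hhPne : (h ∩ P).Nonempty := Finset.nonempty_iff_ne_empty.2 hhP
              rw [phi_else hmix (fun hc => hhP hc.2) L']
              have hQne' : (sunion (h :: L') ∩ Q).Nonempty := by
                rw [sunion_cons, Finset.union_inter_distrib_right, hgQ,
                  Finset.empty_union] at hQne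
                exact hQne
              obtain ⟨ih1, ih2, ih3, ih4, ih5, ih6, ih7⟩ :=
                ih (fun x hx => hne x (List.mem_cons_of_mem g hx))
                  (fun x hx => hsub x (List.mem_cons_of_mem g hx))
                  hLpair (by simpa only [List.headI_cons] using hhPne) hQne'
              have hgdisj : Disjoint g (sunion (h :: L')) := disjoint_sunion hgL
              refine ⟨?_, ?_, ?_, ?_, ?_, ?_, ?_⟩
              · rw [sunion_cons, sunion_cons, ih1]
              · intro x hx
                rcases List.mem_cons.1 hx with rfl | hx'
                · exact hne x (List.mem_cons_self)
                · exact ih2 x hx'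
              · refine List.pairwise_cons.2 ⟨?_, ih3⟩
                intro x hx
                apply Finset.disjoint_of_subset_right ?_ hgdisj
                rw [← ih1]
                exact subset_sunion hx
              · simp only [List.headI_cons]
                exact Finset.inter_subset_left
              · simp only [List.length_cons] at ih5 ⊢
                rcases ih5 with h5 | h5
                · left; omega
                · right; omega
              · cases hphi : phi P Q (h :: L') with
                | nil =>
                    exfalso
                    rw [hphi] at ih4
                    simp only [List.headI_nil, List.headI_cons] at ih4
                    obtain ⟨x, hx⟩ := hhPne
                    exact absurd (ih4 hx) (Finset.notMem_empty x)
                | cons h'' M =>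
                    rw [hphi] at ih4 ih6
                    simp only [List.headI_cons] at ih4
                    have hh''P : ¬(h'' ∩ P = ∅) := by
                      intro hc
                      obtain ⟨x, hx⟩ := hhPne
                      have hx1 : x ∈ h'' := ih4 hx
                      have hx2 : x ∈ P := (Finset.mem_inter.1 hx).2
                      exact absurd (Finset.mem_inter.2 ⟨hx1, hx2⟩)
                        (by rw [hc]; exact Finset.notMem_empty x)
                    rw [phi_else (by rw [hgQ]; rintro ⟨-, hc⟩; exact absurd hc (by simpa using hmix ∘ fun h => ⟨hhead, h⟩)) (fun hc => hh''P hc.2) M]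
                    rw [ih6]
              · intro A R hR
                simp only [List.map_cons]
                rw [applyComp_cons, applyComp_cons]
                congr 1
                have := ih7 A R hR
                simpa only [List.map_cons] using this

end NCAux
namespace NCAux

/-! ### finiteness of the set of set compositions -/

lemma length_le_sum : ∀ l : List ℕ, (∀ x ∈ l, 1 ≤ x) → l.length ≤ l.sum := by
  intro l
  induction l with
  | nil => simp
  | cons x l ih =>
      intro h
      have h1 := h x (List.mem_cons_self)
      have h2 := ih (fun y hy => h y (List.mem_cons_of_mem x hy))
      simp only [List.length_cons, List.sum_cons]
      omega

lemma Gset_finite (r : ℕ) : {γ : SComp | IsSCompOf γ (seg r) ∧ 1 ∈ γ.headI}.Finite := by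
  classical
  set s : Finset (Finset ℕ) := (seg r).powerset with hs
  have hfin : {l : List {x // x ∈ s} | l.length ≤ r}.Finite := List.finite_length_le _ r
  apply Set.Finite.subset (hfin.image (fun l => l.map Subtype.val))
  intro γ hγ
  obtain ⟨⟨hne, hpd, hsu⟩, _⟩ := hγ
  have hmem : ∀ g ∈ γ, g ∈ s := by
    intro g hg
    rw [hs, Finset.mem_powerset]
    rw [← hsu]
    exact subset_sunion hg
  have hlen : γ.length ≤ r := by
    have h1 : (γ.map Finset.card).sum = r := by
      rw [← card_sunion hpd, hsu, card_seg]
    have h2 : (γ.map Finset.card).length ≤ (γ.map Finset.card).sum := by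
      apply length_le_sum
      intro x hx
      obtain ⟨g, hg, rfl⟩ := List.mem_map.1 hx
      exact Finset.card_pos.2 (hne g hg)
    rw [h1, List.length_map] at h2
    exact h2
  refine ⟨γ.attach.map (fun x => ⟨x.1, hmem x.1 x.2⟩), ?_, ?_⟩
  · simp only [Set.mem_setOf_eq, List.length_map, List.length_attach]
    exact hlen
  · show (γ.attach.map (fun x => (⟨x.1, hmem x.1 x.2⟩ : {x // x ∈ s}))).map Subtype.val = γ
    rw [List.map_map]
    exact List.attach_map_subtype_val γ

/-! ### Delta on basis elements -/

open TensorProduct in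
lemma Delta_bas (B : Blocks) : Delta (bas B) = deltaB B := by
  unfold Delta bas
  rw [Finsupp.lsum_apply, Finsupp.sum_single_index (by simp)]
  rw [LinearMap.toSpanSingleton_apply, one_smul]

/-! ### little applyComp lemmas -/

lemma applyComp_empty_letters {δ : SComp} (A : Blocks) (h : ∀ x ∈ δ, x = ∅) :
    applyComp δ A = ∅ := by
  induction δ with
  | nil => rfl
  | cons x δ ih =>
      have hx : x = ∅ := h x (List.mem_cons_self)
      subst hx
      rw [applyComp_empty_letter]
      exact ih (fun y hy => h y (List.mem_cons_of_mem _ hy))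

lemma map_inter_sunion {γ : SComp} {S : Finset ℕ} (h : ∀ g ∈ γ, g ⊆ S) :
    γ.map (· ∩ S) = γ := by
  rw [show γ.map (· ∩ S) = γ.map id from List.map_congr_left
    (fun g hg => Finset.inter_eq_left.2 (h g hg)), List.map_id]

/-! ### the coproduct of γ[A] -/

open TensorProduct in
lemma deltaB_applyComp {A : Blocks} {r : ℕ} (hA : Good A) (hcard : A.card = r)
    {γ : SComp} (hγ : IsSCompOf γ (seg r)) :
    deltaB (applyComp γ A) = ∑ K ∈ (seg r).powerset,
      bas (applyComp (γ.map (· ∩ K)) A) ⊗ₜ[ℚ]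
        bas (applyComp (γ.map (· ∩ (seg r \ K))) A) := by
  obtain ⟨hne, hpd, hsu⟩ := hγ
  have hsum : (γ.map Finset.card).sum = r := by
    rw [← card_sunion hpd, hsu, card_seg]
  have hlet : ∀ g ∈ γ, g ⊆ seg A.card := by
    intro g hg
    rw [hcard, ← hsu]
    exact subset_sunion hg
  have hapcard : (applyComp γ A).card = r := by
    rw [(applyComp_PP hA γ hlet).2, hsum]
  have step1 : deltaB (applyComp γ A) = ∑ K ∈ (seg r).powerset,
      bas (applyComp (γ.map (· ∩ psi γ K)) A) ⊗ₜ[ℚ]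
        bas (applyComp (γ.map (· ∩ (seg r \ psi γ K))) A) := by
    unfold deltaB
    rw [hapcard]
    apply Finset.sum_congr rfl
    intro K hK
    have hKsub : K ⊆ seg r := Finset.mem_powerset.1 hK
    have e1 : stdP (subColl (applyComp γ A) K) = applyComp (γ.map (· ∩ psi γ K)) A := by
      rw [main_restr hA γ hlet K (by rw [hapcard]; exact hKsub), restr_eq_inter hpd]
    have hcompl : psi γ (seg r \ K) = seg r \ psi γ K := by
      have := psi_compl hpd (K := K) (by rw [hsum]; exact hKsub)
      rw [hsum, hsu] at this
      exact this
    have e2 : stdP (subColl (applyComp γ A) (seg r \ K))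
        = applyComp (γ.map (· ∩ (seg r \ psi γ K))) A := by
      rw [main_restr hA γ hlet (seg r \ K)
        (by rw [hapcard]; exact Finset.sdiff_subset), restr_eq_inter hpd, hcompl]
    rw [e1, e2]
  rw [step1]
  have hpsimem : ∀ K ∈ (seg r).powerset, psi γ K ∈ (seg r).powerset := by
    intro K _
    rw [Finset.mem_powerset, ← hsu]
    exact psi_subset γ K
  have hpsiinj : Set.InjOn (psi γ) ↑((seg r).powerset) := by
    intro K hK K' hK' h
    simp only [Finset.coe_powerset, Set.mem_preimage, Set.mem_powerset_iff] at hK hK'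
    exact psi_injOn hpd K (by rw [hsum]; exact_mod_cast hK) K'
      (by rw [hsum]; exact_mod_cast hK') h
  have hpsisurj : Set.SurjOn (psi γ) ↑((seg r).powerset) ↑((seg r).powerset) := by
    have himg : ((seg r).powerset).image (psi γ) = (seg r).powerset := by
      apply Finset.eq_of_subset_of_card_le
      · intro x hx
        obtain ⟨K, hK, rfl⟩ := Finset.mem_image.1 hx
        exact hpsimem K hK
      · rw [Finset.card_image_of_injOn hpsiinj]
    intro x hx
    have hx' : x ∈ (seg r).powerset := by exact_mod_cast hx
    rw [← himg] at hx'
    obtain ⟨K, hK, rfl⟩ := Finset.mem_image.1 hx'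
    exact ⟨K, by exact_mod_cast hK, rfl⟩
  exact Finset.sum_nbij (psi γ) hpsimem hpsiinj hpsisurj (fun K _ => rfl)

end NCAux
namespace NCAux

noncomputable instance : Zero (TensorProduct ℚ NCSym NCSym) :=
  (inferInstance : AddCommMonoid (TensorProduct ℚ NCSym NCSym)).toZero

open TensorProduct in
lemma inner_vanish {A : Blocks} {r : ℕ} (hGoodA : Good A) (hr1 : 1 ≤ r) {K : Finset ℕ}
    (hKsub : K ⊆ seg r) (hK0 : K ≠ ∅) (hKfull : K ≠ seg r) :
    ∑ γ ∈ (Gset_finite r).toFinset,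
      ((-1 : ℚ) ^ (γ.length - 1)) • (bas (applyComp (γ.map (· ∩ K)) A) ⊗ₜ[ℚ]
        bas (applyComp (γ.map (· ∩ (seg r \ K))) A)) = 0 := by
  classical
  set P := if 1 ∈ K then K else seg r \ K with hP
  set Q := seg r \ P with hQ
  have h1segr : (1 : ℕ) ∈ seg r := by simp only [seg, Finset.mem_Icc]; omega
  have hPsub : P ⊆ seg r := by
    rw [hP]; split_ifs
    · exact hKsub
    · exact Finset.sdiff_subset
  have hP1 : (1 : ℕ) ∈ P := by
    rw [hP]; split_ifs with h
    · exact h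
    · exact Finset.mem_sdiff.2 ⟨h1segr, h⟩
  have hPQdisj : Disjoint P Q := Finset.disjoint_sdiff
  have hPQun : P ∪ Q = seg r := Finset.union_sdiff_of_subset hPsub
  have hQne : Q.Nonempty := by
    rw [hQ, hP]
    split_ifs with h
    · exact Finset.sdiff_nonempty.2 (fun hs => hKfull (Finset.Subset.antisymm hKsub hs))
    · rw [Finset.sdiff_sdiff_eq_self hKsub]
      exact Finset.nonempty_iff_ne_empty.2 hK0
  have hKPQ : (K = P ∨ K = Q) ∧ ((seg r \ K) = P ∨ (seg r \ K) = Q) := by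
    rw [hQ, hP]
    split_ifs with h
    · exact ⟨Or.inl rfl, Or.inr rfl⟩
    · constructor
      · right
        rw [Finset.sdiff_sdiff_eq_self hKsub]
      · left; rfl
  -- facts for each γ in the sum
  have hfacts : ∀ γ ∈ (Gset_finite r).toFinset,
      (∀ g ∈ γ, g.Nonempty) ∧ (∀ g ∈ γ, g ⊆ P ∪ Q) ∧ γ.Pairwise Disjoint
      ∧ ((γ.headI ∩ P).Nonempty) ∧ ((sunion γ ∩ Q).Nonempty) ∧ sunion γ = seg r
      ∧ 1 ∈ γ.headI ∧ 1 ≤ γ.length := by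
    intro γ hγ
    rw [Set.Finite.mem_toFinset] at hγ
    obtain ⟨⟨hne, hpd, hsu⟩, h1⟩ := hγ
    have hlen : 1 ≤ γ.length := by
      cases γ with
      | nil => exact absurd h1 (by simp [List.headI]; exact Finset.notMem_empty 1)
      | cons g L => simp
    refine ⟨hne, ?_, hpd, ⟨1, Finset.mem_inter.2 ⟨h1, hP1⟩⟩, ?_, hsu, h1, hlen⟩
    · intro g hg
      rw [hPQun, ← hsu]
      exact subset_sunion hg
    · rw [hsu, Finset.inter_eq_right.2 (by rw [hQ]; exact Finset.sdiff_subset)]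
      exact hQne
  apply Finset.sum_involution (fun γ _ => phi P Q γ)
  · -- sums to zero in pairs
    intro γ hγ
    obtain ⟨hne, hsub, hpd, hhd, hsq, hsu, h1, hlen⟩ := hfacts γ hγ
    obtain ⟨i1, i2, i3, i4, i5, i6, i7⟩ := phi_spec hPQdisj γ hne hsub hpd hhd hsq
    have hplen : 1 ≤ (phi P Q γ).length := by
      cases hphi : phi P Q γ with
      | nil =>
          exfalso
          rw [hphi] at i4
          obtain ⟨x, hx⟩ := hhd
          exact absurd (i4 hx) (by simp [List.headI]; exact Finset.notMem_empty x)
      | cons g L => simp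
    have hT1 : applyComp ((phi P Q γ).map (· ∩ K)) A = applyComp (γ.map (· ∩ K)) A := by
      rcases hKPQ.1 with h | h
      · exact i7 A K (Or.inl h)
      · exact i7 A K (Or.inr h)
    have hT2 : applyComp ((phi P Q γ).map (· ∩ (seg r \ K))) A
        = applyComp (γ.map (· ∩ (seg r \ K))) A := by
      rcases hKPQ.2 with h | h
      · exact i7 A _ (Or.inl h)
      · exact i7 A _ (Or.inr h)
    have hsgn : ((-1 : ℚ) ^ (γ.length - 1)) + ((-1 : ℚ) ^ ((phi P Q γ).length - 1)) = 0 := by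
      rcases i5 with h5 | h5
      · rw [h5, show γ.length + 1 - 1 = (γ.length - 1) + 1 from by omega, pow_succ]
        ring
      · rw [show γ.length - 1 = ((phi P Q γ).length - 1) + 1 from by omega, pow_succ]
        ring
    rw [hT1, hT2, ← add_smul, hsgn, zero_smul]
  · -- phi γ ≠ γ
    intro γ hγ _
    obtain ⟨hne, hsub, hpd, hhd, hsq, hsu, h1, hlen⟩ := hfacts γ hγ
    obtain ⟨_, _, _, _, i5, _, _⟩ := phi_spec hPQdisj γ hne hsub hpd hhd hsq
    intro heq
    rw [heq] at i5
    omega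
  · -- phi γ ∈ G
    intro γ hγ
    obtain ⟨hne, hsub, hpd, hhd, hsq, hsu, h1, hlen⟩ := hfacts γ hγ
    obtain ⟨i1, i2, i3, i4, _, _, _⟩ := phi_spec hPQdisj γ hne hsub hpd hhd hsq
    rw [Set.Finite.mem_toFinset]
    exact ⟨⟨i2, i3, by rw [i1, hsu]⟩, i4 (Finset.mem_inter.2 ⟨h1, hP1⟩)⟩
  · -- involutive
    intro γ hγ
    obtain ⟨hne, hsub, hpd, hhd, hsq, hsu, h1, hlen⟩ := hfacts γ hγ
    obtain ⟨_, _, _, _, _, i6, _⟩ := phi_spec hPQdisj γ hne hsub hpd hhd hsq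
    exact i6

end NCAux

open NCAux in
theorem ncsym_pA_primitive' (n r : ℕ) (hn : 1 ≤ n) (A : Blocks)
    (hA : IsSP A n) (hr : A.card = r) :
    Delta (pNC A r) = pNC A r ⊗ₜ[ℚ] bas (∅ : Blocks) + bas (∅ : Blocks) ⊗ₜ[ℚ] pNC A r := by
  classical
  obtain ⟨hAne, hApd, hAg⟩ := hA
  have hGoodA : Good A := ⟨hAne, hApd⟩
  have hr1 : 1 ≤ r := by
    rcases Finset.eq_empty_or_nonempty A with h | h
    · exfalso
      subst h
      have h1 : (1 : ℕ) ∈ seg n := by simp only [seg, Finset.mem_Icc]; omega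
      rw [← hAg] at h1
      exact absurd h1 (by rw [ground_empty]; exact Finset.notMem_empty 1)
    · rw [← hr]
      exact Finset.card_pos.2 h
  have hfin := Gset_finite r
  set G := hfin.toFinset with hG
  have hpNC : pNC A r
      = ∑ γ ∈ G, ((-1 : ℚ) ^ (γ.length - 1)) • bas (applyComp γ A) := by
    unfold pNC
    rw [← hfin.coe_toFinset, finsum_mem_coe_finset]
  set S' : Finset (Finset ℕ) := (seg r).powerset \ {∅, seg r} with hS'
  have hsegr_ne : (∅ : Finset ℕ) ≠ seg r := by
    intro h
    have h1 : (1 : ℕ) ∈ seg r := by simp only [seg, Finset.mem_Icc]; omega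
    rw [← h] at h1
    exact absurd h1 (Finset.notMem_empty 1)
  have htsub : ({∅, seg r} : Finset (Finset ℕ)) ⊆ (seg r).powerset := by
    intro x hx
    rcases Finset.mem_insert.1 hx with rfl | hx'
    · exact Finset.mem_powerset.2 (Finset.empty_subset _)
    · rw [Finset.mem_singleton.1 hx']
      exact Finset.mem_powerset.2 (Finset.Subset.refl _)
  have key : ∀ γ ∈ G, ((-1 : ℚ) ^ (γ.length - 1)) • deltaB (applyComp γ A)
      = (∑ K ∈ S', ((-1 : ℚ) ^ (γ.length - 1)) • (bas (applyComp (γ.map (· ∩ K)) A) ⊗ₜ[ℚ]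
            bas (applyComp (γ.map (· ∩ (seg r \ K))) A)))
        + (((-1 : ℚ) ^ (γ.length - 1)) • (bas (∅ : Blocks) ⊗ₜ[ℚ] bas (applyComp γ A))
          + ((-1 : ℚ) ^ (γ.length - 1)) • (bas (applyComp γ A) ⊗ₜ[ℚ] bas (∅ : Blocks))) := by
    intro γ hγ
    rw [hG, Set.Finite.mem_toFinset] at hγ
    obtain ⟨hsc, h1⟩ := hγ
    have hsu := hsc.2.2
    have e0 : applyComp (γ.map (· ∩ (∅ : Finset ℕ))) A = ∅ :=
      applyComp_empty_letters A (by
        intro x hx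
        obtain ⟨g, _, rfl⟩ := List.mem_map.1 hx
        exact Finset.inter_empty g)
    have e0' : γ.map (· ∩ (seg r \ ∅)) = γ := by
      rw [Finset.sdiff_empty]
      exact map_inter_sunion (fun g hg => by rw [← hsu]; exact subset_sunion hg)
    have ef : γ.map (· ∩ seg r) = γ :=
      map_inter_sunion (fun g hg => by rw [← hsu]; exact subset_sunion hg)
    have ef' : applyComp (γ.map (· ∩ (seg r \ seg r))) A = ∅ := by
      rw [Finset.sdiff_self]
      exact applyComp_empty_letters A (by
        intro x hx
        obtain ⟨g, _, rfl⟩ := List.mem_map.1 hx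
        exact Finset.inter_empty g)
    rw [deltaB_applyComp hGoodA hr hsc, ← Finset.sum_sdiff htsub, ← hS',
      Finset.sum_pair hsegr_ne, e0, e0', ef, ef', smul_add, smul_add, Finset.smul_sum]
  conv_lhs => rw [hpNC]
  rw [map_sum]
  simp only [map_smul, Delta_bas]
  rw [Finset.sum_congr rfl key, Finset.sum_add_distrib]
  have hzero : (∑ γ ∈ G, ∑ K ∈ S',
      ((-1 : ℚ) ^ (γ.length - 1)) • (bas (applyComp (γ.map (· ∩ K)) A) ⊗ₜ[ℚ]
        bas (applyComp (γ.map (· ∩ (seg r \ K))) A))) = 0 := by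
    rw [Finset.sum_comm]
    apply Finset.sum_eq_zero
    intro K hK
    rw [hS', Finset.mem_sdiff] at hK
    obtain ⟨hKp, hKne⟩ := hK
    simp only [Finset.mem_insert, Finset.mem_singleton] at hKne
    push_neg at hKne
    exact inner_vanish hGoodA hr1 (Finset.mem_powerset.1 hKp) hKne.1.ne_empty hKne.2
  rw [hzero, zero_add, Finset.sum_add_distrib]
  have hX : (∑ γ ∈ G, ((-1 : ℚ) ^ (γ.length - 1)) •
      (bas (applyComp γ A) ⊗ₜ[ℚ] bas (∅ : Blocks))) = pNC A r ⊗ₜ[ℚ] bas (∅ : Blocks) := by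
    rw [hpNC, TensorProduct.sum_tmul]
    apply Finset.sum_congr rfl
    intro γ _
    exact (TensorProduct.smul_tmul' _ _ _).symm
  have hY : (∑ γ ∈ G, ((-1 : ℚ) ^ (γ.length - 1)) •
      (bas (∅ : Blocks) ⊗ₜ[ℚ] bas (applyComp γ A))) = bas (∅ : Blocks) ⊗ₜ[ℚ] pNC A r := by
    rw [hpNC, TensorProduct.tmul_sum]
    apply Finset.sum_congr rfl
    intro γ _
    exact (TensorProduct.tmul_smul (R := ℚ) (r := (-1 : ℚ) ^ (γ.length - 1)) _ _).symm
  rw [hX, hY]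
  exact add_comm _ _

/-- If `A` is an atomic set partition of `[n]` (`n ≥ 1`) with `r` blocks, then
`p(A) = ∑_{γ ∈ Γ'(r)} (-1)^{ℓ(γ)-1} γ[A]` is primitive: `Δ(p(A)) = p(A) ⊗ ∅ + ∅ ⊗ p(A)`. -/
theorem ncsym_pA_primitive (n r : ℕ) (hn : 1 ≤ n) (A : Blocks)
    (hA : IsSP A n) (hr : A.card = r) (hatom : IsAtomicSP A n) :
    Delta (pNC A r) = pNC A r ⊗ₜ[ℚ] bas (∅ : Blocks) + bas (∅ : Blocks) ⊗ₜ[ℚ] pNC A r :=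
  ncsym_pA_primitive' n r hn A hA hr
end

section
/- Let A be an atomic set partition of [n] (n ≥ 1) with r blocks. Then the element p(A) := ∑_{γ ∈ Γ'(r)} (−1)^{ℓ(γ)−1} γ[A] of NCSym is nonzero. -/
open Finset

/-! ### Auxiliary lemmas -/

lemma mem_seg {n x : ℕ} : x ∈ seg n ↔ 1 ≤ x ∧ x ≤ n := Finset.mem_Icc

lemma seg_card (n : ℕ) : (seg n).card = n := by simp [seg]

lemma mem_ground {A : Blocks} {x : ℕ} : x ∈ ground A ↔ ∃ B ∈ A, x ∈ B := by
  simp [ground, Finset.mem_sup]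

lemma mem_ground_of {A : Blocks} {B : Finset ℕ} {x : ℕ} (hB : B ∈ A) (hx : x ∈ B) :
    x ∈ ground A := mem_ground.mpr ⟨B, hB, hx⟩

/-! ### stdFun -/

lemma stdFun_lt {X : Finset ℕ} {x y : ℕ} (hx : x ∈ X) (hxy : x < y) :
    stdFun X x < stdFun X y := by
  unfold stdFun
  have hss : X.filter (· < x) ⊂ X.filter (· < y) := by
    refine ⟨Finset.monotone_filter_right _ (fun z _ hz => lt_trans hz hxy), fun hsub => ?_⟩
    have : x ∈ X.filter (· < y) := Finset.mem_filter.mpr ⟨hx, hxy⟩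
    have := hsub this
    simp at this
  have := Finset.card_lt_card hss
  omega

lemma stdFun_injOn {X : Finset ℕ} {x y : ℕ} (hx : x ∈ X) (hy : y ∈ X)
    (h : stdFun X x = stdFun X y) : x = y := by
  rcases lt_trichotomy x y with h' | h' | h'
  · exact absurd h (ne_of_lt (stdFun_lt hx h'))
  · exact h'
  · exact absurd h.symm (ne_of_lt (stdFun_lt hy h'))

lemma stdFun_image (X : Finset ℕ) : X.image (stdFun X) = seg X.card := by
  apply Finset.eq_of_subset_of_card_le
  · intro a ha
    obtain ⟨x, hx, rfl⟩ := Finset.mem_image.mp ha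
    refine mem_seg.mpr ⟨by unfold stdFun; omega, ?_⟩
    have hss : X.filter (· < x) ⊂ X := by
      refine ⟨Finset.filter_subset _ _, fun hsub => ?_⟩
      have := hsub hx
      simp at this
    have := Finset.card_lt_card hss
    unfold stdFun; omega
  · rw [seg_card, Finset.card_image_of_injOn (fun x hx y hy h => stdFun_injOn hx hy h)]

lemma ground_imageP (A : Blocks) (f : ℕ → ℕ) :
    ground (A.image fun B => B.image f) = (ground A).image f := by
  ext x
  simp only [mem_ground, Finset.mem_image]
  constructor
  · rintro ⟨B', ⟨B, hB, rfl⟩, hx⟩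
    obtain ⟨y, hy, rfl⟩ := Finset.mem_image.mp hx
    exact ⟨y, ⟨B, hB, hy⟩, rfl⟩
  · rintro ⟨y, hy, rfl⟩
    obtain ⟨B, hB, hyB⟩ := hy
    exact ⟨B.image f, ⟨B, hB, rfl⟩, Finset.mem_image_of_mem f hyB⟩

/-! ### stdP -/

lemma isSP_stdP {A : Blocks} {X : Finset ℕ} (h : IsPartitionOf A X) :
    IsSP (stdP A) X.card := by
  obtain ⟨hne, hdisj, hg⟩ := h
  refine ⟨?_, ?_, ?_⟩
  · intro B' hB'
    obtain ⟨B, hB, rfl⟩ := Finset.mem_image.mp hB'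
    exact (hne B hB).image _
  · intro a ha b hb hab
    obtain ⟨B₁, hB₁, rfl⟩ := Finset.mem_image.mp ha
    obtain ⟨B₂, hB₂, rfl⟩ := Finset.mem_image.mp hb
    have hBne : B₁ ≠ B₂ := fun h => hab (by rw [h])
    have hd : Disjoint B₁ B₂ := hdisj hB₁ hB₂ hBne
    have goal : Disjoint (B₁.image (stdFun (ground A))) (B₂.image (stdFun (ground A))) := by
      rw [Finset.disjoint_left]
      intro x hx₁ hx₂
      obtain ⟨y₁, hy₁, hfy₁⟩ := Finset.mem_image.mp hx₁
      obtain ⟨y₂, hy₂, hfy₂⟩ := Finset.mem_image.mp hx₂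
      have : y₁ = y₂ := stdFun_injOn (mem_ground_of hB₁ hy₁) (mem_ground_of hB₂ hy₂)
        (hfy₁.trans hfy₂.symm)
      exact Finset.disjoint_left.mp hd hy₁ (this ▸ hy₂)
    exact goal
  · show ground (A.image fun B => B.image (stdFun (ground A))) = _
    rw [ground_imageP, hg, stdFun_image]

lemma stdFun_seg {n x : ℕ} (hx : x ∈ seg n) : stdFun (seg n) x = x := by
  obtain ⟨h1, h2⟩ := mem_seg.mp hx
  have : (seg n).filter (· < x) = Finset.Ico 1 x := by
    ext y; simp only [seg, Finset.mem_filter, Finset.mem_Icc, Finset.mem_Ico]; omega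
  unfold stdFun
  rw [this, Nat.card_Ico]; omega

lemma stdP_self {A : Blocks} {n : ℕ} (h : IsSP A n) : stdP A = A := by
  have hg : ground A = seg n := h.2.2
  unfold stdP
  rw [hg]
  have h1 : ∀ B ∈ A, B.image (stdFun (seg n)) = B := by
    intro B hB
    have : ∀ x ∈ B, stdFun (seg n) x = x := fun x hx =>
      stdFun_seg (hg ▸ mem_ground_of hB hx)
    rw [Finset.image_congr (fun x hx => this x hx), Finset.image_id']
  calc A.image (fun B => B.image (stdFun (seg n))) = A.image id :=
        Finset.image_congr (fun B hB => h1 B hB)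
    _ = A := Finset.image_id

/-! ### rank and blockAt -/

/-- The rank of a block: its 1-based position in the ordering by minima. -/
def rk (A : Blocks) (B : Finset ℕ) : ℕ := (A.filter fun C => C.min ≤ B.min).card

lemma blockAt_def (A : Blocks) (i : ℕ) :
    blockAt A i = (A.filter fun B => rk A B = i).sup id := rfl

lemma min_injOn {A : Blocks} {X : Finset ℕ} (h : IsPartitionOf A X) :
    ∀ B ∈ A, ∀ C ∈ A, B.min = C.min → B = C := by
  intro B hB C hC hmin
  by_contra hne
  obtain ⟨b, hb⟩ := Finset.min_of_nonempty (h.1 B hB)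
  have hbB : b ∈ B := Finset.mem_of_min hb
  have hbC : b ∈ C := Finset.mem_of_min (hmin ▸ hb)
  exact Finset.disjoint_left.mp (h.2.1 hB hC hne) hbB hbC

lemma rk_lt {A : Blocks} {B C : Finset ℕ} (hC : C ∈ A) (hmin : B.min < C.min) :
    rk A B < rk A C := by
  apply Finset.card_lt_card
  refine ⟨Finset.monotone_filter_right _ (fun D _ hD => le_trans hD (le_of_lt hmin)), fun hsub => ?_⟩
  have : C ∈ A.filter fun D => D.min ≤ C.min := Finset.mem_filter.mpr ⟨hC, le_refl _⟩
  have := hsub this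
  rw [Finset.mem_filter] at this
  exact absurd this.2 (not_le.mpr hmin)

lemma rk_injOn {A : Blocks} {X : Finset ℕ} (h : IsPartitionOf A X) :
    ∀ B ∈ A, ∀ C ∈ A, rk A B = rk A C → B = C := by
  intro B hB C hC hr
  rcases lt_trichotomy B.min C.min with h' | h' | h'
  · exact absurd hr (ne_of_lt (rk_lt hC h'))
  · exact min_injOn h B hB C hC h'
  · exact absurd hr.symm (ne_of_lt (rk_lt hB h'))

lemma rk_mem_seg {A : Blocks} {X : Finset ℕ} (h : IsPartitionOf A X) {B : Finset ℕ}
    (hB : B ∈ A) : rk A B ∈ seg A.card := by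
  refine mem_seg.mpr ⟨?_, Finset.card_le_card (Finset.filter_subset _ _)⟩
  show 1 ≤ (A.filter fun C => C.min ≤ B.min).card
  have : B ∈ A.filter fun C => C.min ≤ B.min := Finset.mem_filter.mpr ⟨hB, le_refl _⟩
  have := Finset.card_pos.mpr ⟨B, this⟩
  omega

lemma rk_image {A : Blocks} {X : Finset ℕ} (h : IsPartitionOf A X) :
    A.image (rk A) = seg A.card := by
  apply Finset.eq_of_subset_of_card_le
  · intro i hi
    obtain ⟨B, hB, rfl⟩ := Finset.mem_image.mp hi
    exact rk_mem_seg h hB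
  · rw [seg_card, Finset.card_image_of_injOn (fun B hB C hC hbc => rk_injOn h B hB C hC hbc)]

lemma blockAt_rk {A : Blocks} {X : Finset ℕ} (h : IsPartitionOf A X) {B : Finset ℕ}
    (hB : B ∈ A) : blockAt A (rk A B) = B := by
  rw [blockAt_def]
  have : A.filter (fun C => rk A C = rk A B) = {B} := by
    ext C
    simp only [Finset.mem_filter, Finset.mem_singleton]
    constructor
    · rintro ⟨hC, hrk⟩; exact rk_injOn h C hC B hB hrk
    · rintro rfl; exact ⟨hB, rfl⟩
  rw [this, Finset.sup_singleton, id]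

lemma blockAt_spec {A : Blocks} {X : Finset ℕ} (h : IsPartitionOf A X) {i : ℕ}
    (hi : i ∈ seg A.card) : blockAt A i ∈ A ∧ rk A (blockAt A i) = i := by
  have : i ∈ A.image (rk A) := (rk_image h) ▸ hi
  obtain ⟨B, hB, rfl⟩ := Finset.mem_image.mp this
  rw [blockAt_rk h hB]
  exact ⟨hB, rfl⟩

lemma blockAt_mem {A : Blocks} {X : Finset ℕ} (h : IsPartitionOf A X) {i : ℕ}
    (hi : i ∈ seg A.card) : blockAt A i ∈ A := (blockAt_spec h hi).1

lemma blockAt_injOn {A : Blocks} {X : Finset ℕ} (h : IsPartitionOf A X) {i j : ℕ}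
    (hi : i ∈ seg A.card) (hj : j ∈ seg A.card) (hij : blockAt A i = blockAt A j) :
    i = j := by
  have h1 := (blockAt_spec h hi).2
  have h2 := (blockAt_spec h hj).2
  rw [← h1, ← h2, hij]

lemma blockAt_ne {A : Blocks} {X : Finset ℕ} (h : IsPartitionOf A X) {i j : ℕ}
    (hi : i ∈ seg A.card) (hj : j ∈ seg A.card) (hij : i ≠ j) :
    Disjoint (blockAt A i) (blockAt A j) :=
  h.2.1 (blockAt_mem h hi) (blockAt_mem h hj)
    (fun hEq => hij (blockAt_injOn h hi hj hEq))

/-! ### subColl -/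

lemma subColl_univ {A : Blocks} {X : Finset ℕ} (h : IsPartitionOf A X) :
    subColl A (seg A.card) = A := by
  unfold subColl
  apply Finset.eq_of_subset_of_card_le
  · intro B hB
    obtain ⟨i, hi, rfl⟩ := Finset.mem_image.mp hB
    exact blockAt_mem h hi
  · rw [Finset.card_image_of_injOn (fun i hi j hj hij => blockAt_injOn h hi hj hij), seg_card]

lemma subColl_isPartition {A : Blocks} {X : Finset ℕ} (h : IsPartitionOf A X)
    {J : Finset ℕ} (hJ : J ⊆ seg A.card) :
    IsPartitionOf (subColl A J) (ground (subColl A J)) := by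
  refine ⟨?_, ?_, rfl⟩
  · intro B hB
    obtain ⟨i, hi, rfl⟩ := Finset.mem_image.mp hB
    exact h.1 _ (blockAt_mem h (hJ hi))
  · intro a ha b hb hab
    obtain ⟨i, hi, rfl⟩ := Finset.mem_image.mp ha
    obtain ⟨j, hj, rfl⟩ := Finset.mem_image.mp hb
    exact h.2.1 (blockAt_mem h (hJ hi)) (blockAt_mem h (hJ hj)) hab

lemma ground_subColl_card {A : Blocks} {X : Finset ℕ} (h : IsPartitionOf A X)
    {J : Finset ℕ} (hJ : J ⊆ seg A.card) :
    (ground (subColl A J)).card = ∑ i ∈ J, (blockAt A i).card := by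
  unfold subColl ground
  rw [Finset.sup_image, Finset.sup_eq_biUnion]
  exact Finset.card_biUnion (fun i hi j hj hij => blockAt_ne h (hJ hi) (hJ hj) hij)

lemma ground_subColl_disjoint {A : Blocks} {X : Finset ℕ} (h : IsPartitionOf A X)
    {J K : Finset ℕ} (hJ : J ⊆ seg A.card) (hK : K ⊆ seg A.card) (hd : Disjoint J K) :
    Disjoint (ground (subColl A J)) (ground (subColl A K)) := by
  rw [Finset.disjoint_left]
  intro x hxJ hxK
  obtain ⟨B, hB, hxB⟩ := mem_ground.mp hxJ
  obtain ⟨C, hC, hxC⟩ := mem_ground.mp hxK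
  obtain ⟨i, hi, rfl⟩ := Finset.mem_image.mp hB
  obtain ⟨j, hj, rfl⟩ := Finset.mem_image.mp hC
  have hij : i ≠ j := fun hEq => Finset.disjoint_left.mp hd hi (hEq ▸ hj)
  exact Finset.disjoint_left.mp (blockAt_ne h (hJ hi) (hK hj) hij) hxB hxC

lemma sum_card_blockAt {A : Blocks} {n : ℕ} (h : IsSP A n) :
    ∑ i ∈ seg A.card, (blockAt A i).card = n := by
  rw [← ground_subColl_card h (subset_refl _), subColl_univ h, h.2.2, seg_card]

/-! ### concatP -/

lemma isSP_empty : IsSP (∅ : Blocks) 0 := by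
  refine ⟨by simp, by simp, ?_⟩
  simp [ground, seg]

lemma concatP_empty (A : Blocks) : concatP A ∅ = A := by
  simp [concatP, shiftP]

lemma isSP_concatP {B C : Blocks} {m k : ℕ} (hB : IsSP B m) (hC : IsSP C k) :
    IsSP (concatP B C) (m + k) := by
  have hgB : ground B = seg m := hB.2.2
  have hgC : ground C = seg k := hC.2.2
  have hm : (ground B).card = m := by rw [hgB, seg_card]
  unfold concatP
  rw [hm]
  have hBsub : ∀ D ∈ B, ∀ x ∈ D, x ≤ m := by
    intro D hD x hx
    exact (mem_seg.mp (hgB ▸ mem_ground_of hD hx)).2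
  have hCsub : ∀ D ∈ C, ∀ x ∈ D, 1 ≤ x := by
    intro D hD x hx
    exact (mem_seg.mp (hgC ▸ mem_ground_of hD hx)).1
  refine ⟨?_, ?_, ?_⟩
  · intro D hD
    rcases Finset.mem_union.mp hD with hD | hD
    · exact hB.1 D hD
    · obtain ⟨D', hD', rfl⟩ := Finset.mem_image.mp hD
      exact (hC.1 D' hD').image _
  · intro a ha b hb hab
    simp only [Finset.coe_union, Set.mem_union, Finset.mem_coe] at ha hb
    have cross : ∀ a ∈ B, ∀ b ∈ shiftP C m, Disjoint a b := by
      intro a ha b hb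
      obtain ⟨D, hD, rfl⟩ := Finset.mem_image.mp hb
      rw [Finset.disjoint_left]
      intro x hxa hxb
      obtain ⟨y, hy, rfl⟩ := Finset.mem_image.mp hxb
      have := hBsub a ha _ hxa
      have := hCsub D hD y hy
      omega
    rcases ha with ha | ha <;> rcases hb with hb | hb
    · exact hB.2.1 ha hb hab
    · exact cross a ha b hb
    · exact (cross b hb a ha).symm
    · obtain ⟨D₁, hD₁, rfl⟩ := Finset.mem_image.mp ha
      obtain ⟨D₂, hD₂, rfl⟩ := Finset.mem_image.mp hb
      have hne : D₁ ≠ D₂ := fun hEq => hab (by rw [hEq])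
      exact (Finset.disjoint_image (add_left_injective m)).mpr (hC.2.1 hD₁ hD₂ hne)
  · show ground (B ∪ shiftP C m) = _
    unfold ground
    rw [Finset.sup_union]
    have : (shiftP C m).sup id = ground (shiftP C m) := rfl
    rw [this]
    unfold shiftP
    rw [ground_imageP, hgC]
    show ground B ∪ _ = _
    rw [hgB]
    ext x
    simp only [Finset.mem_union, Finset.mem_image, mem_seg]
    constructor
    · rintro (⟨h1, h2⟩ | ⟨y, ⟨hy1, hy2⟩, rfl⟩) <;> omega
    · rintro ⟨h1, h2⟩
      rcases le_or_gt x m with h' | h'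
      · exact Or.inl ⟨h1, h'⟩
      · exact Or.inr ⟨x - m, ⟨by omega, by omega⟩, by omega⟩

/-! ### sunion and applyComp -/

lemma sunion_nil : sunion [] = ∅ := rfl

lemma sunion_cons (g : Finset ℕ) (γ : SComp) : sunion (g :: γ) = g ∪ sunion γ := rfl

lemma subset_sunion {g : Finset ℕ} {γ : SComp} (hg : g ∈ γ) : g ⊆ sunion γ := by
  induction γ with
  | nil => simp at hg
  | cons a γ ih =>
    rw [sunion_cons]
    rcases List.mem_cons.mp hg with rfl | hg
    · exact Finset.subset_union_left
    · exact (ih hg).trans Finset.subset_union_right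

lemma disjoint_sunion {x : Finset ℕ} {γ : SComp} (h : ∀ g ∈ γ, Disjoint x g) :
    Disjoint x (sunion γ) := by
  induction γ with
  | nil => simp [sunion_nil]
  | cons a γ ih =>
    rw [sunion_cons, Finset.disjoint_union_right]
    exact ⟨h a (List.mem_cons_self (a := a) (l := γ)), ih (fun g hg => h g (List.mem_cons_of_mem a hg))⟩

lemma applyComp_nil (A : Blocks) : applyComp [] A = ∅ := rfl

lemma applyComp_cons (g : Finset ℕ) (γ : SComp) (A : Blocks) :
    applyComp (g :: γ) A = concatP (stdP (subColl A g)) (applyComp γ A) := rfl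

lemma isSP_applyComp {A : Blocks} {n : ℕ} (h : IsSP A n) (γ : SComp)
    (hsub : ∀ g ∈ γ, g ⊆ seg A.card) (hd : γ.Pairwise Disjoint) :
    IsSP (applyComp γ A) (∑ i ∈ sunion γ, (blockAt A i).card) := by
  induction γ with
  | nil =>
    rw [applyComp_nil, sunion_nil, Finset.sum_empty]
    exact isSP_empty
  | cons g γ ih =>
    rw [applyComp_cons, sunion_cons]
    have hg : g ⊆ seg A.card := hsub g (List.mem_cons_self (a := g) (l := γ))
    have h1 : IsSP (stdP (subColl A g)) (ground (subColl A g)).card :=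
      isSP_stdP (subColl_isPartition h hg)
    have h2 := ih (fun g' hg' => hsub g' (List.mem_cons_of_mem g hg')) hd.of_cons
    have hdisj : Disjoint g (sunion γ) :=
      disjoint_sunion (fun g' hg' => (List.pairwise_cons.mp hd).1 g' hg')
    rw [Finset.sum_union hdisj, ← ground_subColl_card h hg]
    exact isSP_concatP h1 h2

lemma sum_blockAt_pos {A : Blocks} {X : Finset ℕ} (h : IsPartitionOf A X)
    {g : Finset ℕ} (hg : g ⊆ seg A.card) (hne : g.Nonempty) :
    0 < ∑ i ∈ g, (blockAt A i).card := by
  apply Finset.sum_pos _ hne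
  intro i hi
  exact Finset.card_pos.mpr (h.1 _ (blockAt_mem h (hg hi)))

/-! ### γ[A] ≠ A for long γ -/

lemma applyComp_ne_of_atomic {A : Blocks} {n : ℕ} (hatom : IsAtomicSP A n)
    (γ : SComp) (hγ : IsSCompOf γ (seg A.card)) (hlen : 2 ≤ γ.length) :
    applyComp γ A ≠ A := by
  intro hEq
  obtain ⟨h, hn, hno⟩ := hatom
  apply hno
  match γ, hlen with
  | g :: g' :: γ'', _ =>
  set γ' : SComp := g' :: γ'' with hγ'
  obtain ⟨hne, hd, hun⟩ := hγ
  have hsub : ∀ x ∈ g :: γ', x ⊆ seg A.card := fun x hx => hun ▸ subset_sunion hx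
  have hgsub : g ⊆ seg A.card := hsub g List.mem_cons_self
  have hγ'sub : ∀ x ∈ γ', x ⊆ seg A.card := fun x hx => hsub x (List.mem_cons_of_mem g hx)
  set m := ∑ i ∈ g, (blockAt A i).card with hm
  set k := ∑ i ∈ sunion γ', (blockAt A i).card with hk
  have hB : IsSP (stdP (subColl A g)) m := by
    rw [hm, ← ground_subColl_card h hgsub]
    exact isSP_stdP (subColl_isPartition h hgsub)
  have hC : IsSP (applyComp γ' A) k := isSP_applyComp h γ' hγ'sub hd.of_cons
  have hdisj : Disjoint g (sunion γ') :=
    disjoint_sunion (fun x hx => (List.pairwise_cons.mp hd).1 x hx)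
  have hsum : m + k = n := by
    rw [hm, hk, ← Finset.sum_union hdisj, ← sunion_cons, hun]
    exact sum_card_blockAt h
  have hm0 : 0 < m := sum_blockAt_pos h hgsub (hne g List.mem_cons_self)
  have hsun'sub : sunion γ' ⊆ seg A.card := by
    rw [← hun, sunion_cons]; exact Finset.subset_union_right
  have hk0 : 0 < k := by
    apply sum_blockAt_pos h hsun'sub
    obtain ⟨x, hx⟩ := hne g' (List.mem_cons_of_mem g (List.mem_cons_self (a := g') (l := γ'')))
    exact ⟨x, subset_sunion (List.mem_cons_self (a := g') (l := γ'')) hx⟩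
  refine ⟨m, stdP (subColl A g), applyComp γ' A, hm0, by omega, hB, ?_, ?_⟩
  · rw [show n - m = k by omega]; exact hC
  · conv_lhs => rw [← hEq]
    rw [applyComp_cons]

lemma applyComp_single {A : Blocks} {n : ℕ} (h : IsSP A n) :
    applyComp [seg A.card] A = A := by
  rw [show [seg A.card] = seg A.card :: ([] : SComp) from rfl, applyComp_cons, applyComp_nil,
    concatP_empty, subColl_univ h, stdP_self h]

lemma length_le_card_sunion (γ : SComp) (hne : ∀ g ∈ γ, g.Nonempty)
    (hd : γ.Pairwise Disjoint) : γ.length ≤ (sunion γ).card := by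
  induction γ with
  | nil => simp
  | cons g γ ih =>
    rw [sunion_cons, Finset.card_union_of_disjoint
      (disjoint_sunion (List.pairwise_cons.mp hd).1)]
    have h1 : 1 ≤ g.card := Finset.card_pos.mpr (hne g List.mem_cons_self)
    have h2 := ih (fun x hx => hne x (List.mem_cons_of_mem g hx)) hd.of_cons
    simp only [List.length_cons]; omega

lemma S_finite (r : ℕ) :
    {γ : SComp | IsSCompOf γ (seg r) ∧ 1 ∈ γ.headI}.Finite := by
  have hsub : {γ : SComp | IsSCompOf γ (seg r) ∧ 1 ∈ γ.headI} ⊆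
      (List.map (Subtype.val : {s : Finset ℕ // s ∈ (seg r).powerset} → Finset ℕ)) ''
        {l | l.length ≤ r} := by
    rintro γ ⟨⟨hne, hd, hun⟩, -⟩
    refine ⟨γ.attach.map (fun x => ⟨x.1, Finset.mem_powerset.mpr (hun ▸ subset_sunion x.2)⟩),
      ?_, ?_⟩
    · simp only [Set.mem_setOf_eq, List.length_map, List.length_attach]
      calc γ.length ≤ (sunion γ).card := length_le_card_sunion γ hne hd
        _ = r := by rw [hun, seg_card]
    · simp [List.map_map]
  exact ((List.finite_length_le _ r).image _).subset hsub

lemma applyComp_ne {A : Blocks} {n : ℕ} (hatom : IsAtomicSP A n) {γ : SComp}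
    (hγ : IsSCompOf γ (seg A.card)) (h1 : 1 ∈ γ.headI) (hne : γ ≠ [seg A.card]) :
    applyComp γ A ≠ A := by
  match γ with
  | [] => exact absurd h1 (by simp [List.headI, show (default : Finset ℕ) = ∅ from rfl])
  | [g] =>
    exfalso
    apply hne
    have : g = seg A.card := by rw [← hγ.2.2, sunion_cons, sunion_nil, Finset.union_empty]
    rw [this]
  | g :: g' :: γ'' =>
    exact applyComp_ne_of_atomic hatom _ hγ (by simp only [List.length_cons]; omega)

/-- If `A` is an atomic set partition of `[n]` (`n ≥ 1`) with `r` blocks, then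
`p(A) = ∑_{γ ∈ Γ'(r)} (-1)^{ℓ(γ)-1} γ[A]` is a nonzero element of `NCSym`. -/
theorem ncsym_pA_ne_zero (n r : ℕ) (hn : 1 ≤ n) (A : Blocks)
    (hA : IsSP A n) (hr : A.card = r) (hatom : IsAtomicSP A n) :
    pNC A r ≠ 0 := by
  subst hr
  intro h0
  have hfin := S_finite A.card
  have hA1 : A.Nonempty := by
    rcases Finset.eq_empty_or_nonempty A with rfl | h
    · have h1 : (1:ℕ) ∈ ground (∅ : Blocks) := hA.2.2 ▸ mem_seg.mpr ⟨le_refl 1, hn⟩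
      simp [ground] at h1
    · exact h
  have hr1 : 1 ≤ A.card := Finset.card_pos.mpr hA1
  have h1seg : (1:ℕ) ∈ seg A.card := mem_seg.mpr ⟨le_refl 1, hr1⟩
  have hmem : [seg A.card] ∈ hfin.toFinset := by
    rw [Set.Finite.mem_toFinset]
    refine ⟨⟨?_, ?_, ?_⟩, ?_⟩
    · intro B hB
      rw [List.mem_singleton] at hB
      subst hB
      exact ⟨1, h1seg⟩
    · simp
    · rw [sunion_cons, sunion_nil, Finset.union_empty]
    · simpa [List.headI] using h1seg
  have heval : (pNC A A.card) A = 1 := by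
    rw [pNC, finsum_mem_eq_finite_toFinset_sum _ hfin, Finsupp.finset_sum_apply,
      Finset.sum_eq_single_of_mem _ hmem]
    · simp [bas, applyComp_single hA]
    · intro γ hγ hne'
      rw [Set.Finite.mem_toFinset] at hγ
      have : applyComp γ A ≠ A := applyComp_ne hatom hγ.1 hγ.2 hne'
      simp [bas, Finsupp.single_apply, this]
  rw [h0] at heval
  simp at heval
end

section
/- Fix r ≥ 1 and an ordered partition K ⊔ L = [r] with 1 ∈ K and K ≠ [r]. Then ∑_{γ ∈ Γ'(r)} (−1)^{ℓ(γ)} (γ⌋_K) ⊗ (γ⌋_L) = 0, as an element of V ⊗ V, where V is the free ℚ-vector space with basis the set compositions of subsets of [r]. -/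
open Finset

/-- The restriction `γ⌋_K`: intersect every letter with `K` and drop empty intersections. -/
def restrictC (γ : SComp) (K : Finset ℕ) : SComp :=
  (γ.map (· ∩ K)).filter fun B => B.Nonempty

/-- The free `ℚ`-vector space with basis all words; in particular it contains the
set compositions of subsets of `[r]` as basis elements. -/
abbrev VComp := SComp →₀ ℚ

noncomputable instance : Zero (TensorProduct ℚ VComp VComp) :=
  (inferInstance : AddCommMonoid (TensorProduct ℚ VComp VComp)).toZero

namespace NcsymKeyAux

@[simp] lemma sunion_nil : sunion [] = ∅ := rfl
@[simp] lemma sunion_cons (A : Finset ℕ) (t : SComp) : sunion (A :: t) = A ∪ sunion t := rfl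

lemma sunion_append (l₁ l₂ : SComp) : sunion (l₁ ++ l₂) = sunion l₁ ∪ sunion l₂ := by
  induction l₁ with
  | nil => simp
  | cons A t ih => simp [ih, Finset.union_assoc]

lemma mem_sunion {x : ℕ} : ∀ {γ : SComp}, x ∈ sunion γ ↔ ∃ B ∈ γ, x ∈ B
  | [] => by simp
  | A :: t => by simp [Finset.mem_union, mem_sunion (γ := t)]

lemma subset_sunion {B : Finset ℕ} {γ : SComp} (h : B ∈ γ) : B ⊆ sunion γ :=
  fun x hx => mem_sunion.mpr ⟨B, h, hx⟩

variable {K L : Finset ℕ}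

/-- The sign-reversing involution: split the first mixed block, or merge the first
adjacent pair (K-block, L-block). -/
def invol (K L : Finset ℕ) : SComp → SComp
  | [] => []
  | [A] => if (A ∩ K).Nonempty ∧ (A ∩ L).Nonempty then [A ∩ K, A ∩ L] else [A]
  | A :: B :: rest =>
    if (A ∩ K).Nonempty ∧ (A ∩ L).Nonempty then (A ∩ K) :: (A ∩ L) :: B :: rest
    else if A ⊆ K ∧ B ⊆ L then (A ∪ B) :: rest
    else A :: invol K L (B :: rest)

lemma invol_split {A : Finset ℕ} (rest : SComp) (h : (A ∩ K).Nonempty ∧ (A ∩ L).Nonempty) :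
    invol K L (A :: rest) = (A ∩ K) :: (A ∩ L) :: rest := by
  cases rest <;> simp [invol, h]

lemma invol_merge {A B : Finset ℕ} (rest : SComp)
    (h1 : ¬((A ∩ K).Nonempty ∧ (A ∩ L).Nonempty)) (h2 : A ⊆ K ∧ B ⊆ L) :
    invol K L (A :: B :: rest) = (A ∪ B) :: rest := by
  simp [invol, h1, h2]

lemma invol_skip {A B : Finset ℕ} (rest : SComp)
    (h1 : ¬((A ∩ K).Nonempty ∧ (A ∩ L).Nonempty)) (h2 : ¬(A ⊆ K ∧ B ⊆ L)) :
    invol K L (A :: B :: rest) = A :: invol K L (B :: rest) := by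
  simp [invol, h1, h2]

lemma not_subset_L (hKL : Disjoint K L) {B : Finset ℕ} (hB : B.Nonempty) (hBK : B ⊆ K) :
    ¬ B ⊆ L := by
  obtain ⟨x, hx⟩ := hB
  exact fun hBL => (Finset.disjoint_left.mp hKL (hBK hx)) (hBL hx)

/-- `Good` collects the hypotheses guaranteeing the involution acts. -/
def Good (K L : Finset ℕ) (γ : SComp) : Prop :=
  (∀ B ∈ γ, B.Nonempty ∧ B ⊆ K ∪ L) ∧ (∃ B ∈ γ, (B ∩ L).Nonempty) ∧ (γ.headI ∩ K).Nonempty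

lemma invol_append (hKL : Disjoint K L) (pre : SComp) (hpre : ∀ P ∈ pre, P.Nonempty ∧ P ⊆ K)
    {rest : SComp} (hne : rest ≠ []) (hhead : ¬ rest.headI ⊆ L) :
    invol K L (pre ++ rest) = pre ++ invol K L rest := by
  induction pre with
  | nil => rfl
  | cons P pre' ih =>
    obtain ⟨B, rest2, hB⟩ : ∃ B rest2, pre' ++ rest = B :: rest2 := by
      cases h : pre' ++ rest with
      | nil => exact absurd (List.append_eq_nil_iff.mp h).2 hne
      | cons B rest2 => exact ⟨B, rest2, rfl⟩
    have hP := hpre P (by simp)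
    have hPnm : ¬((P ∩ K).Nonempty ∧ (P ∩ L).Nonempty) := by
      rintro ⟨-, x, hx⟩
      exact Finset.disjoint_left.mp hKL (hP.2 (Finset.mem_inter.mp hx).1)
        (Finset.mem_inter.mp hx).2
    have hBL : ¬ B ⊆ L := by
      cases pre' with
      | nil =>
        have : rest.headI = B := by
          cases rest with
          | nil => exact absurd rfl hne
          | cons a t => simpa using congrArg List.headI hB
        rwa [← this]
      | cons Q pre'' =>
        have hQ := hpre Q (by simp)
        have : Q = B := by simpa using congrArg List.headI hB
        rw [← this]; exact not_subset_L hKL hQ.1 hQ.2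
    have : invol K L (P :: (pre' ++ rest)) = P :: invol K L (pre' ++ rest) := by
      rw [hB, invol_skip _ hPnm (by rintro ⟨-, h⟩; exact hBL h), ← hB]
    rw [List.cons_append, this, ih (fun Q hQ => hpre Q (by simp [hQ])), List.cons_append]

/-- Classification of the action of `invol` on a `Good` composition. -/
theorem invol_cases (hKL : Disjoint K L) :
    ∀ γ : SComp, Good K L γ →
    (∃ pre A suf, γ = pre ++ A :: suf ∧
        invol K L γ = pre ++ (A ∩ K) :: (A ∩ L) :: suf ∧
        (A ∩ K).Nonempty ∧ (A ∩ L).Nonempty ∧ A ⊆ K ∪ L ∧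
        ∀ P ∈ pre, P.Nonempty ∧ P ⊆ K)
    ∨ (∃ pre A B suf, γ = pre ++ A :: B :: suf ∧
        invol K L γ = pre ++ (A ∪ B) :: suf ∧
        A.Nonempty ∧ A ⊆ K ∧ B.Nonempty ∧ B ⊆ L ∧
        ∀ P ∈ pre, P.Nonempty ∧ P ⊆ K)
  | [], hG => absurd hG.2.1 (by simp)
  | [A], hG => by
    have hAL : (A ∩ L).Nonempty := by
      obtain ⟨B, hB, h⟩ := hG.2.1
      simp only [List.mem_singleton] at hB; rwa [hB] at h
    have hAK : (A ∩ K).Nonempty := hG.2.2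
    exact Or.inl ⟨[], A, [], rfl, invol_split [] ⟨hAK, hAL⟩, hAK, hAL,
      (hG.1 A (by simp)).2, by simp⟩
  | A :: B :: rest, hG => by
    have hAK : (A ∩ K).Nonempty := hG.2.2
    have hAcov := hG.1 A (by simp)
    by_cases hmix : (A ∩ K).Nonempty ∧ (A ∩ L).Nonempty
    · exact Or.inl ⟨[], A, B :: rest, rfl, invol_split _ hmix, hmix.1, hmix.2, hAcov.2, by simp⟩
    have hALe : A ∩ L = ∅ := by
      rw [← Finset.not_nonempty_iff_eq_empty]; exact fun h => hmix ⟨hAK, h⟩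
    have hAsK : A ⊆ K := by
      intro x hx
      rcases Finset.mem_union.mp (hAcov.2 hx) with h | h
      · exact h
      · exact absurd (Finset.mem_inter.mpr ⟨hx, h⟩) (by simp [hALe])
    by_cases hm : A ⊆ K ∧ B ⊆ L
    · exact Or.inr ⟨[], A, B, rest, rfl, invol_merge _ hmix hm, hAcov.1, hm.1,
        (hG.1 B (by simp)).1, hm.2, by simp⟩
    · have hBL : ¬ B ⊆ L := fun h => hm ⟨hAsK, h⟩
      have hG' : Good K L (B :: rest) := by
        refine ⟨fun C hC => hG.1 C (by simp [hC]), ?_, ?_⟩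
        · obtain ⟨C, hC, h⟩ := hG.2.1
          rcases List.mem_cons.mp hC with rfl | hC'
          · exact absurd h (by simp [hALe])
          · exact ⟨C, hC', h⟩
        · obtain ⟨x, hx, hxL⟩ := Finset.not_subset.mp hBL
          have := (hG.1 B (by simp)).2 hx
          rcases Finset.mem_union.mp this with h | h
          · exact ⟨x, Finset.mem_inter.mpr ⟨by simpa using hx, h⟩⟩
          · exact absurd h hxL
      have heq : invol K L (A :: B :: rest) = A :: invol K L (B :: rest) :=
        invol_skip _ hmix hm
      rcases invol_cases hKL (B :: rest) hG' with
        ⟨pre, A', suf, h1, h2, h3, h4, h5, h6⟩ | ⟨pre, A', B', suf, h1, h2, h3, h4, h5, h6, h7⟩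
      · exact Or.inl ⟨A :: pre, A', suf, by rw [List.cons_append, ← h1],
          by rw [heq, h2, List.cons_append], h3, h4, h5, by
            rintro P hP
            rcases List.mem_cons.mp hP with rfl | hP'
            · exact ⟨hAcov.1, hAsK⟩
            · exact h6 P hP'⟩
      · exact Or.inr ⟨A :: pre, A', B', suf, by rw [List.cons_append, ← h1],
          by rw [heq, h2, List.cons_append], h3, h4, h5, h6, by
            rintro P hP
            rcases List.mem_cons.mp hP with rfl | hP'
            · exact ⟨hAcov.1, hAsK⟩
            · exact h7 P hP'⟩

end NcsymKeyAux

namespace NcsymKeyAux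

variable {K L : Finset ℕ}

lemma restrictC_append (l₁ l₂ : SComp) (X : Finset ℕ) :
    restrictC (l₁ ++ l₂) X = restrictC l₁ X ++ restrictC l₂ X := by
  simp [restrictC, List.filter_append]

lemma restrictC_cons (A : Finset ℕ) (t : SComp) (X : Finset ℕ) :
    restrictC (A :: t) X =
      if (A ∩ X).Nonempty then (A ∩ X) :: restrictC t X else restrictC t X := by
  by_cases h : (A ∩ X).Nonempty <;> simp [restrictC, h]

lemma union_inter_of_subsets (hKL : Disjoint K L) {A B : Finset ℕ}
    (hAK : A ⊆ K) (hBL : B ⊆ L) : (A ∪ B) ∩ K = A := by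
  ext x
  simp only [Finset.mem_inter, Finset.mem_union]
  constructor
  · rintro ⟨hAB, hK⟩
    rcases hAB with h | h
    · exact h
    · exact absurd (hBL h) (Finset.disjoint_left.mp hKL hK)
  · exact fun h => ⟨Or.inl h, hAK h⟩

lemma not_union_subset_L (hKL : Disjoint K L) {A B : Finset ℕ}
    (hA : A.Nonempty) (hAK : A ⊆ K) : ¬ A ∪ B ⊆ L := by
  obtain ⟨x, hx⟩ := hA
  exact fun h => Finset.disjoint_left.mp hKL (hAK hx) (h (Finset.mem_union_left _ hx))

theorem invol_props (hKL : Disjoint K L) (γ : SComp) (hG : Good K L γ)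
    (hpd : γ.Pairwise Disjoint) :
    invol K L (invol K L γ) = γ
    ∧ ((invol K L γ).length = γ.length + 1 ∨ γ.length = (invol K L γ).length + 1)
    ∧ restrictC (invol K L γ) K = restrictC γ K
    ∧ restrictC (invol K L γ) L = restrictC γ L
    ∧ (∀ B ∈ invol K L γ, B.Nonempty)
    ∧ (invol K L γ).Pairwise Disjoint
    ∧ sunion (invol K L γ) = sunion γ
    ∧ γ.headI ∩ K ⊆ (invol K L γ).headI := by
  have hLK : L ∩ K = ∅ := Finset.disjoint_iff_inter_eq_empty.mp hKL.symm
  have hKLe : K ∩ L = ∅ := Finset.disjoint_iff_inter_eq_empty.mp hKL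
  rcases invol_cases hKL γ hG with
    ⟨pre, A, suf, h1, h2, hAK, hAL, hAcov, hpre⟩ |
    ⟨pre, A, B, suf, h1, h2, hA, hAsK, hB, hBsL, hpre⟩
  · -- split case
    have hunion : (A ∩ K) ∪ (A ∩ L) = A := by
      rw [← Finset.inter_union_distrib_left, Finset.inter_eq_left.mpr hAcov]
    have hAKK : A ∩ K ∩ K = A ∩ K := by rw [Finset.inter_assoc, Finset.inter_self]
    have hALK : A ∩ L ∩ K = ∅ := by rw [Finset.inter_assoc, hLK, Finset.inter_empty]
    have hAKL : A ∩ K ∩ L = ∅ := by rw [Finset.inter_assoc, hKLe, Finset.inter_empty]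
    have hALL : A ∩ L ∩ L = A ∩ L := by rw [Finset.inter_assoc, Finset.inter_self]
    refine ⟨?_, ?_, ?_, ?_, ?_, ?_, ?_, ?_⟩
    · rw [h2, invol_append hKL pre hpre (by simp)
        (by simpa using not_subset_L hKL hAK Finset.inter_subset_right),
        invol_merge suf (by simp [hAKL]) ⟨Finset.inter_subset_right, Finset.inter_subset_right⟩,
        hunion, ← h1]
    · left; rw [h2, h1]; simp; omega
    · rw [h2, h1, restrictC_append, restrictC_append]
      congr 1
      rw [restrictC_cons, restrictC_cons, restrictC_cons, hAKK, hALK]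
      simp [hAK]
    · rw [h2, h1, restrictC_append, restrictC_append]
      congr 1
      rw [restrictC_cons, restrictC_cons, restrictC_cons, hAKL, hALL]
      simp [hAL]
    · intro C hC
      rw [h2] at hC
      rcases List.mem_append.mp hC with h | h
      · exact (hpre C h).1
      · rcases List.mem_cons.mp h with rfl | h
        · exact hAK
        · rcases List.mem_cons.mp h with rfl | h
          · exact hAL
          · exact (hG.1 C (by rw [h1]; simp [h])).1
    · rw [h1, List.pairwise_append] at hpd
      obtain ⟨hp1, hp2, hp3⟩ := hpd
      rw [List.pairwise_cons] at hp2
      obtain ⟨hA2, hsuf⟩ := hp2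
      rw [h2, List.pairwise_append]
      refine ⟨hp1, ?_, ?_⟩
      · rw [List.pairwise_cons, List.pairwise_cons]
        refine ⟨?_, ⟨?_, hsuf⟩⟩
        · intro b hb
          rcases List.mem_cons.mp hb with rfl | hb
          · exact Disjoint.mono Finset.inter_subset_right Finset.inter_subset_right hKL
          · exact (hA2 b hb).mono_left Finset.inter_subset_left
        · exact fun b hb => (hA2 b hb).mono_left Finset.inter_subset_left
      · intro a ha b hb
        rcases List.mem_cons.mp hb with rfl | hb
        · exact (hp3 a ha A (by simp)).mono_right Finset.inter_subset_left
        · rcases List.mem_cons.mp hb with rfl | hb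
          · exact (hp3 a ha A (by simp)).mono_right Finset.inter_subset_left
          · exact hp3 a ha b (by simp [hb])
    · rw [h2, h1, sunion_append, sunion_append]
      congr 1
      rw [sunion_cons, sunion_cons, sunion_cons, ← Finset.union_assoc, hunion]
    · rw [h2, h1]
      cases pre with
      | nil => simp
      | cons P pre' => simp
  · -- merge case
    have hK1 : (A ∪ B) ∩ K = A := union_inter_of_subsets hKL hAsK hBsL
    have hL1 : (A ∪ B) ∩ L = B := by
      rw [Finset.union_comm]; exact union_inter_of_subsets hKL.symm hBsL hAsK
    have hAiK : A ∩ K = A := Finset.inter_eq_left.mpr hAsK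
    have hBiL : B ∩ L = B := Finset.inter_eq_left.mpr hBsL
    have hBiK : B ∩ K = ∅ := by
      rw [← Finset.subset_empty, ← hLK]; exact Finset.inter_subset_inter hBsL Finset.Subset.rfl
    have hAiL : A ∩ L = ∅ := by
      rw [← Finset.subset_empty, ← hKLe]; exact Finset.inter_subset_inter hAsK Finset.Subset.rfl
    refine ⟨?_, ?_, ?_, ?_, ?_, ?_, ?_, ?_⟩
    · rw [h2, invol_append hKL pre hpre (by simp)
        (by simpa using not_union_subset_L hKL hA hAsK),
        invol_split suf (by rw [hK1, hL1]; exact ⟨hA, hB⟩), hK1, hL1, ← h1]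
    · right; rw [h2, h1]; simp; omega
    · rw [h2, h1, restrictC_append, restrictC_append]
      congr 1
      rw [restrictC_cons, restrictC_cons, restrictC_cons, hK1, hAiK, hBiK]
      simp [hA]
    · rw [h2, h1, restrictC_append, restrictC_append]
      congr 1
      rw [restrictC_cons, restrictC_cons, restrictC_cons, hL1, hAiL, hBiL]
      simp [hB]
    · intro C hC
      rw [h2] at hC
      rcases List.mem_append.mp hC with h | h
      · exact (hpre C h).1
      · rcases List.mem_cons.mp h with rfl | h
        · exact hA.mono Finset.subset_union_left
        · exact (hG.1 C (by rw [h1]; simp [h])).1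
    · rw [h1, List.pairwise_append] at hpd
      obtain ⟨hp1, hp2, hp3⟩ := hpd
      rw [List.pairwise_cons] at hp2
      obtain ⟨hA2, hp2'⟩ := hp2
      rw [List.pairwise_cons] at hp2'
      obtain ⟨hB2, hsuf⟩ := hp2'
      rw [h2, List.pairwise_append]
      refine ⟨hp1, ?_, ?_⟩
      · rw [List.pairwise_cons]
        refine ⟨fun b hb => ?_, hsuf⟩
        exact Finset.disjoint_union_left.mpr
          ⟨hA2 b (by simp [hb]), hB2 b hb⟩
      · intro a ha b hb
        rcases List.mem_cons.mp hb with rfl | hb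
        · exact Finset.disjoint_union_right.mpr
            ⟨hp3 a ha A (by simp), hp3 a ha B (by simp)⟩
        · exact hp3 a ha b (by simp [hb])
    · rw [h2, h1, sunion_append, sunion_append]
      congr 1
      rw [sunion_cons, sunion_cons, sunion_cons, ← Finset.union_assoc]
    · rw [h2, h1]
      cases pre with
      | nil =>
        simp only [List.nil_append, List.headI]
        exact Finset.inter_subset_left.trans Finset.subset_union_left
      | cons P pre' => simp

end NcsymKeyAux

namespace NcsymKeyAux

variable {K L : Finset ℕ}

lemma good_of_mem {r : ℕ} (hcover : K ∪ L = seg r) (h1K : 1 ∈ K) (hK : K ≠ seg r)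
    {γ : SComp} (h : IsSCompOf γ (seg r) ∧ 1 ∈ γ.headI) : Good K L γ := by
  obtain ⟨⟨hne, hpd, hsu⟩, h1⟩ := h
  refine ⟨fun B hB => ⟨hne B hB, by rw [hcover, ← hsu]; exact subset_sunion hB⟩, ?_,
    ⟨1, Finset.mem_inter.mpr ⟨h1, h1K⟩⟩⟩
  have hLne : L.Nonempty := by
    rcases L.eq_empty_or_nonempty with h | h
    · rw [h, Finset.union_empty] at hcover; exact absurd hcover hK
    · exact h
  obtain ⟨x, hx⟩ := hLne
  have : x ∈ sunion γ := by rw [hsu, ← hcover]; exact Finset.mem_union_right _ hx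
  obtain ⟨B, hB, hxB⟩ := mem_sunion.mp this
  exact ⟨B, hB, ⟨x, Finset.mem_inter.mpr ⟨hxB, hx⟩⟩⟩

lemma scomp_finite (r : ℕ) : {γ : SComp | IsSCompOf γ (seg r) ∧ 1 ∈ γ.headI}.Finite := by
  classical
  have h1 : {l : List {B : Finset ℕ // B ∈ (seg r).powerset} |
      l.length ≤ Fintype.card {B : Finset ℕ // B ∈ (seg r).powerset}}.Finite :=
    List.finite_length_le _ _
  apply Set.Finite.subset (h1.image (List.map Subtype.val))
  rintro γ ⟨⟨hne, hpd, hsu⟩, -⟩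
  have hmem : ∀ B ∈ γ, B ∈ (seg r).powerset := fun B hB =>
    Finset.mem_powerset.mpr (hsu ▸ subset_sunion hB)
  refine ⟨γ.attach.map (fun x => (⟨x.1, hmem x.1 x.2⟩ :
      {B : Finset ℕ // B ∈ (seg r).powerset})), ?_, ?_⟩
  · have hmval : (γ.attach.map (fun x => (⟨x.1, hmem x.1 x.2⟩ :
        {B : Finset ℕ // B ∈ (seg r).powerset}))).map Subtype.val = γ := by
      simp [List.map_map, Function.comp_def]
    have hnd : γ.Nodup := by
      refine hpd.imp_of_mem ?_
      intro a b ha hb hd he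
      have h2 : Disjoint a a := by subst he; exact hd
      exact (hne a ha).ne_empty (disjoint_self.mp h2)
    exact (List.Nodup.of_map Subtype.val (by rwa [hmval])).length_le_card
  · simp [List.map_map, Function.comp_def]

end NcsymKeyAux


/-- For `r ≥ 1` and an ordered partition `K ⊔ L = [r]` with `1 ∈ K`, `K ≠ [r]`,
`∑_{γ ∈ Γ'(r)} (-1)^{ℓ(γ)} (γ⌋_K) ⊗ (γ⌋_L) = 0` in `V ⊗ V`. -/
theorem ncsym_key_lemma (r : ℕ) (hr : 1 ≤ r) (K L : Finset ℕ)
    (hdisj : Disjoint K L) (hcover : K ∪ L = seg r) (h1K : 1 ∈ K) (hK : K ≠ seg r) :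
    (∑ᶠ γ ∈ {γ : SComp | IsSCompOf γ (seg r) ∧ 1 ∈ γ.headI},
        ((-1 : ℚ) ^ γ.length) •
          (Finsupp.single (restrictC γ K) (1 : ℚ) ⊗ₜ[ℚ] Finsupp.single (restrictC γ L) (1 : ℚ)))
      = (0 : TensorProduct ℚ VComp VComp) := by
  classical
  have hfin := NcsymKeyAux.scomp_finite r
  rw [finsum_mem_eq_finite_toFinset_sum _ hfin]
  refine Finset.sum_involution (fun γ _ => NcsymKeyAux.invol K L γ) ?_ ?_ ?_ ?_
  · intro γ ha
    have hmem : IsSCompOf γ (seg r) ∧ 1 ∈ γ.headI := (Set.Finite.mem_toFinset hfin).mp ha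
    obtain ⟨hinv, hlen, hrK, hrL, hblock, hpw, hsu, hhd⟩ :=
      NcsymKeyAux.invol_props hdisj γ (NcsymKeyAux.good_of_mem hcover h1K hK hmem) hmem.1.2.1
    rw [hrK, hrL, ← add_smul]
    rcases hlen with h | h
    · rw [h, pow_succ]
      have : (-1 : ℚ) ^ γ.length + (-1 : ℚ) ^ γ.length * -1 = 0 := by ring
      rw [this, zero_smul]
    · rw [h, pow_succ]
      have : (-1 : ℚ) ^ (NcsymKeyAux.invol K L γ).length * -1 +
          (-1 : ℚ) ^ (NcsymKeyAux.invol K L γ).length = 0 := by ring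
      rw [this, zero_smul]
  · intro γ ha _
    have hmem : IsSCompOf γ (seg r) ∧ 1 ∈ γ.headI := (Set.Finite.mem_toFinset hfin).mp ha
    obtain ⟨hinv, hlen, -⟩ :=
      NcsymKeyAux.invol_props hdisj γ (NcsymKeyAux.good_of_mem hcover h1K hK hmem) hmem.1.2.1
    intro heq
    rw [heq] at hlen
    omega
  · intro γ ha
    have hmem : IsSCompOf γ (seg r) ∧ 1 ∈ γ.headI := (Set.Finite.mem_toFinset hfin).mp ha
    obtain ⟨hinv, hlen, hrK, hrL, hblock, hpw, hsu, hhd⟩ :=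
      NcsymKeyAux.invol_props hdisj γ (NcsymKeyAux.good_of_mem hcover h1K hK hmem) hmem.1.2.1
    refine (Set.Finite.mem_toFinset hfin).mpr ⟨⟨hblock, hpw, ?_⟩, ?_⟩
    · rw [hsu]; exact hmem.1.2.2
    · exact hhd (Finset.mem_inter.mpr ⟨hmem.2, h1K⟩)
  · intro γ ha
    have hmem : IsSCompOf γ (seg r) ∧ 1 ∈ γ.headI := (Set.Finite.mem_toFinset hfin).mp ha
    exact (NcsymKeyAux.invol_props hdisj γ
      (NcsymKeyAux.good_of_mem hcover h1K hK hmem) hmem.1.2.1).1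
end
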